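/- arXiv:2101.01300 — 7 statements merged into one kernel-verified Lean document; each statement's English description precedes it below -/
import Mathlib

section
/- Assume ‖x_k^{(0)}‖ = 1 and that the step size satisfies α ≤ 1/(3λ_1(2K−1)). Then for all t ≥ 0, ‖x_k^{(t)}‖ < √3 and (x_k^{(t)})ᵀ C x_k^{(t)} < 1/α. -/
open Matrix Finset

/-- Coerce a plain vector into `EuclideanSpace` (they are definitionally equal). -/
def toE {d : ℕ} (v : Fin d → ℝ) : EuclideanSpace ℝ (Fin d) := WithLp.toLp 2 v

lemma sum_Icc_one (d : ℕ) {M : Type*} [AddCommMonoid M] (f : ℕ → M) :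
    ∑ l ∈ Finset.Icc 1 d, f l = ∑ i : Fin d, f (i.1 + 1) := by
  induction d with
  | zero => simp
  | succ n ih =>
      rw [Finset.sum_Icc_succ_top (by omega), ih, Fin.sum_univ_castSucc]
      simp

lemma sum_Icc_split (k d : ℕ) {M : Type*} [AddCommMonoid M] (hk : 1 ≤ k) (hkd : k ≤ d)
    (f : ℕ → M) :
    (∑ l ∈ Finset.Icc 1 (k-1), f l) + ∑ l ∈ Finset.Icc k d, f l = ∑ l ∈ Finset.Icc 1 d, f l := by
  rw [← Finset.sum_union]
  · congr 1
    ext a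
    simp only [Finset.mem_union, Finset.mem_Icc]
    omega
  · rw [Finset.disjoint_left]
    intro a ha hb
    simp only [Finset.mem_Icc] at ha hb
    omega

lemma sum_dot {d : ℕ} {ι : Type*} (s : Finset ι) (f : ι → Fin d → ℝ) (w : Fin d → ℝ) :
    (∑ i ∈ s, f i) ⬝ᵥ w = ∑ i ∈ s, f i ⬝ᵥ w := by
  simp only [dotProduct, Finset.sum_apply, Finset.sum_mul]
  exact Finset.sum_comm

lemma dot_sum {d : ℕ} {ι : Type*} (s : Finset ι) (f : ι → Fin d → ℝ) (w : Fin d → ℝ) :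
    w ⬝ᵥ (∑ i ∈ s, f i) = ∑ i ∈ s, w ⬝ᵥ f i := by
  simp only [dotProduct, Finset.sum_apply, Finset.mul_sum]
  exact Finset.sum_comm

lemma complete' {d : ℕ} (v : ℕ → Fin d → ℝ)
    (horth : ∀ l l', 1 ≤ l → l ≤ d → 1 ≤ l' → l' ≤ d →
      v l ⬝ᵥ v l' = if l = l' then 1 else 0)
    (y : Fin d → ℝ) :
    ∑ l ∈ Finset.Icc 1 d, (v l ⬝ᵥ y) • v l = y := by
  rw [sum_Icc_one]
  set Q : Matrix (Fin d) (Fin d) ℝ := Matrix.of (fun i j => v (i.1+1) j) with hQ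
  have hQQ : Q * Qᵀ = 1 := by
    ext i j
    have h := horth (i.1+1) (j.1+1) (by omega) (by omega) (by omega) (by omega)
    simp only [Matrix.mul_apply, Matrix.transpose_apply, hQ, Matrix.of_apply, Matrix.one_apply]
    rw [show (∑ m, v (i.1+1) m * v (j.1+1) m) = v (i.1+1) ⬝ᵥ v (j.1+1) from rfl, h]
    simp [Fin.val_inj]
  have hQtQ : Qᵀ * Q = 1 := mul_eq_one_comm.mp hQQ
  have key : ∑ i : Fin d, (v (i.1+1) ⬝ᵥ y) • v (i.1+1) = Qᵀ *ᵥ (Q *ᵥ y) := by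
    funext j
    simp only [Finset.sum_apply, Pi.smul_apply, smul_eq_mul, Matrix.mulVec,
      Matrix.transpose_apply, hQ, Matrix.of_apply, dotProduct]
    exact Finset.sum_congr rfl fun i _ => by ring
  rw [key, Matrix.mulVec_mulVec, hQtQ, Matrix.one_mulVec]

lemma dot_sums {d : ℕ} (v : ℕ → Fin d → ℝ)
    (horth : ∀ l l', 1 ≤ l → l ≤ d → 1 ≤ l' → l' ≤ d →
      v l ⬝ᵥ v l' = if l = l' then 1 else 0)
    (S T : Finset ℕ) (hS : S ⊆ Finset.Icc 1 d) (hT : T ⊆ Finset.Icc 1 d) (a b : ℕ → ℝ) :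
    (∑ l ∈ S, a l • v l) ⬝ᵥ (∑ m ∈ T, b m • v m) = ∑ l ∈ S ∩ T, a l * b l := by
  rw [sum_dot]
  have h1 : ∀ l ∈ S, (a l • v l) ⬝ᵥ (∑ m ∈ T, b m • v m)
      = if l ∈ T then a l * b l else 0 := by
    intro l hl
    have hl' := Finset.mem_Icc.mp (hS hl)
    rw [smul_dotProduct, dot_sum, smul_eq_mul, Finset.mul_sum]
    have h2 : ∀ m ∈ T, a l * (v l ⬝ᵥ (b m • v m)) = if m = l then a l * b l else 0 := by
      intro m hm
      have hm' := Finset.mem_Icc.mp (hT hm)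
      rw [dotProduct_smul, horth l m hl'.1 hl'.2 hm'.1 hm'.2]
      by_cases h : m = l
      · subst h; simp [mul_comm]
      · simp [h, Ne.symm h]
    rw [Finset.sum_congr rfl h2, Finset.sum_ite_eq' T l (fun _ => a l * b l)]
  rw [Finset.sum_congr rfl h1, Finset.sum_ite_mem]

lemma core_arith (n u v e : ℝ) (hn0 : 0 ≤ n) (hn3 : n < 3) (hv0 : 0 ≤ v) (hvu : v ≤ u)
    (hue : u ≤ e * n) (he : e ≤ 1/3) (he0 : 0 ≤ e) :
    n * (1 - u)^2 + v * (2 + e - 2*u) < 3 := by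
  have hu0 : 0 ≤ u := le_trans hv0 hvu
  have hun : u ≤ n/3 := le_trans hue (by nlinarith)
  have hu1 : u ≤ 1 := by linarith
  have hcoef : 0 ≤ 2 + e - 2*u := by linarith
  have h1 : v * (2 + e - 2*u) ≤ u * (7/3 - 2*u) := by nlinarith
  have key : n * (1-u)^2 + u * (7/3 - 2*u) < 3 := by
    rcases le_or_gt (7/3) n with h | h
    · nlinarith [mul_nonneg hu0 (sub_nonneg.mpr h), sq_nonneg u, mul_nonneg hu0 hu0]
    · nlinarith [sq_nonneg u, mul_nonneg hu0 hu0, sq_nonneg (1-u)]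
  linarith

set_option maxHeartbeats 2000000 in
/-- Lemma 1 of the paper: with a unit-norm initialization and
step size `α ≤ 1/(3 λ₁ (2K−1))`, the modified GHA iterates satisfy
`‖x_k^{(t)}‖ < √3` and `(x_k^{(t)})ᵀ C x_k^{(t)} < 1/α` for all `t`. -/
theorem modified_GHA_bounded_iterates
    (d K : ℕ) (hK1 : 1 ≤ K) (hKd : K < d)
    (C : Matrix (Fin d) (Fin d) ℝ) (hC : C.PosSemidef)
    (lam : ℕ → ℝ) (q : ℕ → EuclideanSpace ℝ (Fin d))
    (horth : ∀ l l', 1 ≤ l → l ≤ d → 1 ≤ l' → l' ≤ d →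
      (q l) ⬝ᵥ (q l' : Fin d → ℝ) = if l = l' then 1 else 0)
    (heig : ∀ l, 1 ≤ l → l ≤ d → C.mulVec (q l) = lam l • (q l : Fin d → ℝ))
    (hstrict : ∀ l l', 1 ≤ l → l < l' → l' ≤ d → l ≤ K → lam l' < lam l)
    (hmono : ∀ l l', 1 ≤ l → l ≤ l' → l' ≤ d → lam l' ≤ lam l)
    (hnonneg : ∀ l, 1 ≤ l → l ≤ d → 0 ≤ lam l)
    (hKpos : 0 < lam K)
    (k : ℕ) (hk1 : 1 ≤ k) (hkK : k ≤ K)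
    (α : ℝ) (hα : 0 < α)
    (x : ℕ → EuclideanSpace ℝ (Fin d))
    (hiter : ∀ t, x (t + 1) = x t + α •
      (toE (C.mulVec (x t)) - ((x t) ⬝ᵥ C.mulVec (x t)) • x t
        - ∑ p ∈ Finset.Icc 1 (k - 1), ((q p) ⬝ᵥ C.mulVec (x t)) • q p))
    (hstep : α ≤ 1 / (3 * lam 1 * (2 * (K : ℝ) - 1)))
    (hnorm0 : ‖x 0‖ = 1) :
    ∀ t, ‖x t‖ < Real.sqrt 3 ∧ (x t) ⬝ᵥ C.mulVec (x t) < 1 / α := by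
  -- plain eigenvectors
  set v : ℕ → Fin d → ℝ := fun l => q l with hv
  have horth' : ∀ l l', 1 ≤ l → l ≤ d → 1 ≤ l' → l' ≤ d →
      v l ⬝ᵥ v l' = if l = l' then 1 else 0 := horth
  have heig' : ∀ l, 1 ≤ l → l ≤ d → C.mulVec (v l) = lam l • v l := heig
  have hkd : k ≤ d := by omega
  -- basic scalar facts
  have hlam1 : 0 < lam 1 := lt_of_lt_of_le hKpos (hmono 1 K le_rfl hK1 (le_of_lt hKd))
  have hKr : (1:ℝ) ≤ 2*(K:ℝ) - 1 := by
    have : (1:ℝ) ≤ (K:ℝ) := by exact_mod_cast hK1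
    linarith
  have hden : 0 < 3 * lam 1 * (2*(K:ℝ) - 1) := by nlinarith
  have hαM : α * (3 * lam 1 * (2*(K:ℝ) - 1)) ≤ 1 := by
    have := (le_div_iff₀ hden).mp hstep
    linarith
  have hal : α * lam 1 ≤ 1/3 := by nlinarith
  have hinv : 3 * lam 1 ≤ 1/α := by
    rw [le_div_iff₀ hα]
    nlinarith
  -- general quadratic form facts, for any vector y
  have master : ∀ y : Fin d → ℝ,
      0 ≤ y ⬝ᵥ C.mulVec y ∧ y ⬝ᵥ C.mulVec y ≤ lam 1 * (y ⬝ᵥ y) := by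
    intro y
    have hcomp := complete' v horth' y
    have key : ∀ (T : Finset ℕ), T ⊆ Finset.Icc 1 d → ∀ b : ℕ → ℝ,
        y ⬝ᵥ (∑ m ∈ T, b m • v m) = ∑ m ∈ T, (v m ⬝ᵥ y) * b m := by
      intro T hT b
      conv_lhs => rw [← hcomp]
      rw [dot_sums v horth' _ _ le_rfl hT, Finset.inter_eq_right.mpr hT]
    have hCy : C.mulVec y = ∑ l ∈ Finset.Icc 1 d, (lam l * (v l ⬝ᵥ y)) • v l := by
      conv_lhs => rw [← hcomp]
      rw [show C.mulVec (∑ l ∈ Finset.Icc 1 d, (v l ⬝ᵥ y) • v l)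
          = ∑ l ∈ Finset.Icc 1 d, C.mulVec ((v l ⬝ᵥ y) • v l) from
        map_sum (C.mulVecLin) _ _]
      refine Finset.sum_congr rfl fun l hl => ?_
      have hl' := Finset.mem_Icc.mp hl
      rw [show C.mulVec ((v l ⬝ᵥ y) • v l) = (v l ⬝ᵥ y) • C.mulVec (v l) from
        map_smul (C.mulVecLin) _ _, heig' l hl'.1 hl'.2, smul_smul, mul_comm]
    have hβ : y ⬝ᵥ C.mulVec y
        = ∑ l ∈ Finset.Icc 1 d, (v l ⬝ᵥ y) * (lam l * (v l ⬝ᵥ y)) := by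
      rw [hCy]; exact key _ le_rfl _
    have hn : y ⬝ᵥ y = ∑ l ∈ Finset.Icc 1 d, (v l ⬝ᵥ y) * (v l ⬝ᵥ y) := by
      conv_lhs => rw [← hcomp]
      rw [dot_sums v horth' _ _ le_rfl le_rfl, Finset.inter_self]
    constructor
    · rw [hβ]
      refine Finset.sum_nonneg fun l hl => ?_
      have hl' := Finset.mem_Icc.mp hl
      have := hnonneg l hl'.1 hl'.2
      nlinarith [sq_nonneg (v l ⬝ᵥ y)]
    · rw [hβ, hn, Finset.mul_sum]
      refine Finset.sum_le_sum fun l hl => ?_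
      have hl' := Finset.mem_Icc.mp hl
      have h1 := hmono 1 l le_rfl hl'.1 hl'.2
      have h0 := hnonneg l hl'.1 hl'.2
      nlinarith [sq_nonneg (v l ⬝ᵥ y)]
  -- the norm-square invariant
  have H : ∀ t, (x t : Fin d → ℝ) ⬝ᵥ (x t : Fin d → ℝ) < 3 := by
    intro t
    induction t with
    | zero =>
        have h0 : (x 0 : Fin d → ℝ) ⬝ᵥ (x 0 : Fin d → ℝ) = ‖x 0‖^2 := by
          rw [EuclideanSpace.norm_eq, Real.sq_sqrt (by positivity)]
          simp [dotProduct, Real.norm_eq_abs, sq_abs, pow_two]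
        rw [h0, hnorm0]
        norm_num
    | succ t ih =>
        have hy : ∃ y : Fin d → ℝ, y = (x t : Fin d → ℝ) := ⟨x t, rfl⟩
        obtain ⟨y, hy⟩ := hy
        rw [← hy] at ih
        have hcomp := complete' v horth' y
        have key : ∀ (T : Finset ℕ), T ⊆ Finset.Icc 1 d → ∀ b : ℕ → ℝ,
            y ⬝ᵥ (∑ m ∈ T, b m • v m) = ∑ m ∈ T, (v m ⬝ᵥ y) * b m := by
          intro T hT b
          conv_lhs => rw [← hcomp]
          rw [dot_sums v horth' _ _ le_rfl hT, Finset.inter_eq_right.mpr hT]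
        have hCy : C.mulVec y = ∑ l ∈ Finset.Icc 1 d, (lam l * (v l ⬝ᵥ y)) • v l := by
          conv_lhs => rw [← hcomp]
          rw [show C.mulVec (∑ l ∈ Finset.Icc 1 d, (v l ⬝ᵥ y) • v l)
              = ∑ l ∈ Finset.Icc 1 d, C.mulVec ((v l ⬝ᵥ y) • v l) from
            map_sum (C.mulVecLin) _ _]
          refine Finset.sum_congr rfl fun l hl => ?_
          have hl' := Finset.mem_Icc.mp hl
          rw [show C.mulVec ((v l ⬝ᵥ y) • v l) = (v l ⬝ᵥ y) • C.mulVec (v l) from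
            map_smul (C.mulVecLin) _ _, heig' l hl'.1 hl'.2, smul_smul, mul_comm]
        have hIccsub : Finset.Icc k d ⊆ Finset.Icc 1 d := by
          intro a ha; have := Finset.mem_Icc.mp ha
          exact Finset.mem_Icc.mpr ⟨by omega, this.2⟩
        -- the projection terms
        have hproj : ∀ p ∈ Finset.Icc 1 (k-1), (v p ⬝ᵥ C.mulVec y) • v p
            = (lam p * (v p ⬝ᵥ y)) • v p := by
          intro p hp
          have hp' := Finset.mem_Icc.mp hp
          have hpd : p ∈ Finset.Icc 1 d := Finset.mem_Icc.mpr ⟨hp'.1, by omega⟩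
          have hdp : v p ⬝ᵥ C.mulVec y = lam p * (v p ⬝ᵥ y) := by
            rw [hCy, show v p = ∑ l ∈ ({p} : Finset ℕ), (1:ℝ) • v l by simp,
              dot_sums v horth' _ _ (by simpa using hpd) le_rfl,
              Finset.singleton_inter_of_mem hpd]
            simp
          rw [hdp]
        -- iteration in plain form
        have h1 : (x (t+1) : Fin d → ℝ) = y + α • (C.mulVec y - (y ⬝ᵥ C.mulVec y) • y
            - ∑ p ∈ Finset.Icc 1 (k - 1), (v p ⬝ᵥ C.mulVec y) • v p) := by
          rw [hy, hiter t]; simp [toE, hv, WithLp.ofLp_sum]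
        have hsplit := sum_Icc_split k d hk1 hkd (fun l => (lam l * (v l ⬝ᵥ y)) • v l)
        have h2 : (x (t+1) : Fin d → ℝ) = y + α •
            ((∑ l ∈ Finset.Icc k d, (lam l * (v l ⬝ᵥ y)) • v l) - (y ⬝ᵥ C.mulVec y) • y) := by
          rw [h1, Finset.sum_congr rfl hproj]
          congr 1
          rw [hCy, ← hsplit]
          abel
        -- scalar quantities
        set β : ℝ := y ⬝ᵥ C.mulVec y with hβdef
        set B : Fin d → ℝ := ∑ l ∈ Finset.Icc k d, (lam l * (v l ⬝ᵥ y)) • v l with hB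
        set γ : ℝ := y ⬝ᵥ B with hγdef
        set BB : ℝ := B ⬝ᵥ B with hBBdef
        set n : ℝ := y ⬝ᵥ y with hndef
        have hγ : γ = ∑ l ∈ Finset.Icc k d, (v l ⬝ᵥ y) * (lam l * (v l ⬝ᵥ y)) := by
          rw [hγdef, hB]; exact key _ hIccsub _
        have hBB : BB = ∑ l ∈ Finset.Icc k d,
            (lam l * (v l ⬝ᵥ y)) * (lam l * (v l ⬝ᵥ y)) := by
          rw [hBBdef, hB, dot_sums v horth' _ _ hIccsub hIccsub, Finset.inter_self]
        have hβ : β = ∑ l ∈ Finset.Icc 1 d, (v l ⬝ᵥ y) * (lam l * (v l ⬝ᵥ y)) := by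
          rw [hβdef, hCy]; exact key _ le_rfl _
        have hγ0 : 0 ≤ γ := by
          rw [hγ]
          refine Finset.sum_nonneg fun l hl => ?_
          have hl' := Finset.mem_Icc.mp (hIccsub hl)
          have := hnonneg l hl'.1 hl'.2
          nlinarith [sq_nonneg (v l ⬝ᵥ y)]
        have hγβ : γ ≤ β := by
          rw [hγ, hβ, ← sum_Icc_split k d hk1 hkd
            (fun l => (v l ⬝ᵥ y) * (lam l * (v l ⬝ᵥ y)))]
          have hpos : 0 ≤ ∑ l ∈ Finset.Icc 1 (k-1), (v l ⬝ᵥ y) * (lam l * (v l ⬝ᵥ y)) := by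
            refine Finset.sum_nonneg fun l hl => ?_
            have hl' := Finset.mem_Icc.mp hl
            have := hnonneg l hl'.1 (by omega)
            nlinarith [sq_nonneg (v l ⬝ᵥ y)]
          linarith
        have hβn : β ≤ lam 1 * n := (master y).2
        have hβ0 : 0 ≤ β := (master y).1
        have hn0 : 0 ≤ n := by
          rw [hndef]; exact Finset.sum_nonneg fun l _ => mul_self_nonneg _
        have hBBle : BB ≤ lam 1 * γ := by
          rw [hBB, hγ, Finset.mul_sum]
          refine Finset.sum_le_sum fun l hl => ?_
          have hl' := Finset.mem_Icc.mp (hIccsub hl)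
          have h1l := hmono 1 l le_rfl hl'.1 hl'.2
          have h0l := hnonneg l hl'.1 hl'.2
          nlinarith [mul_nonneg (mul_nonneg (sub_nonneg.mpr h1l) h0l)
            (mul_self_nonneg (v l ⬝ᵥ y))]
        -- expansion of the new norm
        have hd : (x (t+1) : Fin d → ℝ) ⬝ᵥ (x (t+1) : Fin d → ℝ)
            = n + 2*α*(γ - β*n) + α^2*(BB - 2*β*γ + β^2*n) := by
          rw [h2]
          have hcm : B ⬝ᵥ y = γ := dotProduct_comm _ _
          simp only [dotProduct_add, add_dotProduct, dotProduct_sub,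
            sub_dotProduct, dotProduct_smul, smul_dotProduct, smul_eq_mul,
            hcm, ← hγdef, ← hBBdef, ← hndef, ← hβdef]
          ring
        -- final arithmetic
        have hA : α^2*BB ≤ α^2*(lam 1 * γ) := mul_le_mul_of_nonneg_left hBBle (sq_nonneg α)
        have hvu : α*γ ≤ α*β := mul_le_mul_of_nonneg_left hγβ hα.le
        have hue : α*β ≤ (α*lam 1)*n := by nlinarith [mul_le_mul_of_nonneg_left hβn hα.le]
        have step1 : n + 2*α*(γ - β*n) + α^2*(BB - 2*β*γ + β^2*n)
            ≤ n*(1-α*β)^2 + (α*γ)*(2 + α*lam 1 - 2*(α*β)) := by nlinarith [hA]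
        have step2 : n*(1-α*β)^2 + (α*γ)*(2 + α*lam 1 - 2*(α*β)) < 3 :=
          core_arith n (α*β) (α*γ) (α*lam 1) hn0 ih (mul_nonneg hα.le hγ0) hvu hue hal
            (mul_nonneg hα.le hlam1.le)
        rw [hd]
        linarith
  intro t
  have ht := H t
  have hval : ‖x t‖ = Real.sqrt ((x t : Fin d → ℝ) ⬝ᵥ (x t : Fin d → ℝ)) := by
    rw [EuclideanSpace.norm_eq]
    congr 1
    simp [dotProduct, Real.norm_eq_abs, sq_abs, pow_two]
  constructor
  · rw [hval]
    exact Real.sqrt_lt_sqrt (Finset.sum_nonneg fun i _ => mul_self_nonneg _) ht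
  · have h1 := (master (x t)).2
    have h2 : lam 1 * ((x t : Fin d → ℝ) ⬝ᵥ (x t : Fin d → ℝ)) < lam 1 * 3 :=
      mul_lt_mul_of_pos_left ht hlam1
    calc (x t : Fin d → ℝ) ⬝ᵥ C.mulVec (x t)
        ≤ lam 1 * ((x t : Fin d → ℝ) ⬝ᵥ (x t : Fin d → ℝ)) := h1
      _ < lam 1 * 3 := h2
      _ ≤ 1/α := by linarith
end

section
/- Let η = min{ (1 − 3αλ_1)² λ_m , (x̃_k^{(0)})ᵀ C x̃_k^{(0)} } and suppose η > 0 and that for all t ≥ 0, η < (x_k^{(t)})ᵀ C x_k^{(t)} < 1/α. Then with γ = (1 − αη)² ∈ (0,1) and a_1 = Σ_{l=1}^{k−1} (z_{k,l}^{(0)})², one has for all t ≥ 0: Σ_{l=1}^{k−1} (z_{k,l}^{(t)})² ≤ a_1 γ^t. -/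
open Matrix Finset

/-- Lemma 3 of the paper: linear decay of the lower-order
eigenbasis coefficients `z_{k,l}^{(t)} = q_lᵀ x_k^{(t)}`, `l = 1, …, k−1`, of the
modified GHA iterates, with rate `γ = (1−αη)² ∈ (0,1)` and constant
`a₁ = Σ_{l=1}^{k−1} (z_{k,l}^{(0)})²`. -/
theorem modified_GHA_lower_coeff_decay
    (d K : ℕ) (hK1 : 1 ≤ K) (hKd : K < d)
    (C : Matrix (Fin d) (Fin d) ℝ) (hC : C.PosSemidef)
    (lam : ℕ → ℝ) (q : ℕ → EuclideanSpace ℝ (Fin d))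
    (horth : ∀ l l', 1 ≤ l → l ≤ d → 1 ≤ l' → l' ≤ d →
      (q l) ⬝ᵥ (q l' : Fin d → ℝ) = if l = l' then 1 else 0)
    (heig : ∀ l, 1 ≤ l → l ≤ d → C.mulVec (q l) = lam l • (q l : Fin d → ℝ))
    (hstrict : ∀ l l', 1 ≤ l → l < l' → l' ≤ d → l ≤ K → lam l' < lam l)
    (hmono : ∀ l l', 1 ≤ l → l ≤ l' → l' ≤ d → lam l' ≤ lam l)
    (hnonneg : ∀ l, 1 ≤ l → l ≤ d → 0 ≤ lam l)
    (hKpos : 0 < lam K)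
    (k : ℕ) (hk1 : 1 ≤ k) (hkK : k ≤ K)
    (α : ℝ) (hα : 0 < α)
    (x : ℕ → EuclideanSpace ℝ (Fin d))
    (hiter : ∀ t, x (t + 1) = x t + α •
      (toE (C.mulVec (x t)) - ((x t) ⬝ᵥ C.mulVec (x t)) • x t
        - ∑ p ∈ Finset.Icc 1 (k - 1), ((q p) ⬝ᵥ C.mulVec (x t)) • q p))
    -- `λ_m` : the smallest nonzero eigenvalue of `C`
    (m : ℕ) (hm1 : 1 ≤ m) (hmd : m ≤ d) (hmne : lam m ≠ 0)
    (hmsmall : ∀ l, 1 ≤ l → l ≤ d → lam l ≠ 0 → lam m ≤ lam l)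
    -- `η = min{(1 − 3αλ₁)² λ_m, (x̃_k^{(0)})ᵀ C x̃_k^{(0)}}`
    (η : ℝ)
    (hη : η = min ((1 - 3 * α * lam 1) ^ 2 * lam m)
        ((∑ l ∈ Finset.Icc k d, ((q l) ⬝ᵥ (x 0 : Fin d → ℝ)) • q l) ⬝ᵥ
          C.mulVec (∑ l ∈ Finset.Icc k d, ((q l) ⬝ᵥ (x 0 : Fin d → ℝ)) • q l)))
    (hηpos : 0 < η)
    (hbound : ∀ t, η < (x t) ⬝ᵥ C.mulVec (x t) ∧ (x t) ⬝ᵥ C.mulVec (x t) < 1 / α) :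
    (0 < (1 - α * η) ^ 2 ∧ (1 - α * η) ^ 2 < 1) ∧
      ∀ t, ∑ l ∈ Finset.Icc 1 (k - 1), ((q l) ⬝ᵥ (x t : Fin d → ℝ)) ^ 2 ≤
        (∑ l ∈ Finset.Icc 1 (k - 1), ((q l) ⬝ᵥ (x 0 : Fin d → ℝ)) ^ 2)
          * ((1 - α * η) ^ 2) ^ t := by
  have h0 := hbound 0
  have hηα : α * η < 1 := by
    have h1 : η < 1 / α := lt_trans h0.1 h0.2
    have h2 : α * η < α * (1 / α) := by
      exact mul_lt_mul_of_pos_left h1 hα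
    rwa [mul_one_div_cancel hα.ne'] at h2
  have hγ0 : 0 < 1 - α * η := by linarith
  have hγ1 : (1 - α * η) ^ 2 < 1 := by
    have hpos : 0 < α * η := mul_pos hα hηpos
    nlinarith
  -- symmetry of C
  have hsym : C.transpose = C := by
    have := hC.1
    simpa [Matrix.IsHermitian, Matrix.conjTranspose, Matrix.map, Matrix.transpose] using this
  have hqC : ∀ l, 1 ≤ l → l ≤ d → ∀ v : Fin d → ℝ,
      (q l : Fin d → ℝ) ⬝ᵥ C.mulVec v = lam l * ((q l : Fin d → ℝ) ⬝ᵥ v) := by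
    intro l hl1 hld v
    rw [dotProduct_mulVec]
    have h1 : vecMul (q l : Fin d → ℝ) C = C.mulVec (q l) := by
      rw [← Matrix.mulVec_transpose, hsym]
    rw [h1, heig l hl1 hld, smul_dotProduct]
    rfl
  -- the step recurrence for coefficients l ∈ Icc 1 (k-1)
  have hstep : ∀ t l, l ∈ Finset.Icc 1 (k - 1) →
      (q l : Fin d → ℝ) ⬝ᵥ (x (t + 1) : Fin d → ℝ)
        = (1 - α * ((x t) ⬝ᵥ C.mulVec (x t))) * ((q l : Fin d → ℝ) ⬝ᵥ (x t : Fin d → ℝ)) := by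
    intro t l hl
    rw [Finset.mem_Icc] at hl
    have hl1 : 1 ≤ l := hl.1
    have hld : l ≤ d := by omega
    obtain ⟨w, hw⟩ : ∃ w : Fin d → ℝ, toE w = x t := ⟨x t, rfl⟩
    obtain ⟨Q, hQ⟩ : ∃ Q : ℕ → Fin d → ℝ, ∀ p, toE (Q p) = q p := ⟨fun p => q p, fun _ => rfl⟩
    have hx : x (t + 1) = toE (w + α • (C.mulVec w - (w ⬝ᵥ C.mulVec w) • w
        - ∑ p ∈ Finset.Icc 1 (k - 1), ((Q p) ⬝ᵥ C.mulVec w) • (Q p))) := by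
      rw [hiter t, ← hw]
      simp only [← hQ]
      ext i
      simp [toE, Finset.sum_apply]
    rw [← hw, ← hQ l, hx]
    simp only [toE]
    have hdsum : Q l ⬝ᵥ ∑ p ∈ Finset.Icc 1 (k - 1), ((Q p ⬝ᵥ C.mulVec w) • Q p)
        = ∑ p ∈ Finset.Icc 1 (k - 1), Q l ⬝ᵥ ((Q p ⬝ᵥ C.mulVec w) • Q p) := by
      simp only [dotProduct, Finset.sum_apply, Finset.mul_sum, Pi.smul_apply, smul_eq_mul]
      exact Finset.sum_comm
    rw [dotProduct_add, dotProduct_smul, dotProduct_sub, dotProduct_sub,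
      dotProduct_smul, hdsum]
    have hqC' : ∀ p, 1 ≤ p → p ≤ d → ∀ v : Fin d → ℝ,
        Q p ⬝ᵥ C.mulVec v = lam p * (Q p ⬝ᵥ v) := by
      intro p hp1 hpd v
      have := hqC p hp1 hpd v
      rw [← hQ p] at this
      exact this
    have hS : ∑ p ∈ Finset.Icc 1 (k - 1),
        Q l ⬝ᵥ ((Q p ⬝ᵥ C.mulVec w) • Q p)
        = lam l * (Q l ⬝ᵥ w) := by
      rw [Finset.sum_eq_single l]
      · have horth' : Q l ⬝ᵥ Q l = 1 := by
          have := horth l l hl1 hld hl1 hld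
          rw [← hQ l] at this
          simpa [toE] using this
        rw [dotProduct_smul, horth']
        simp [hqC' l hl1 hld]
      · intro p hp hpl
        rw [Finset.mem_Icc] at hp
        have hp1 : 1 ≤ p := hp.1
        have hpd : p ≤ d := by omega
        have horth' : Q l ⬝ᵥ Q p = 0 := by
          have := horth l p hl1 hld hp1 hpd
          rw [← hQ l, ← hQ p] at this
          simpa [toE, Ne.symm hpl] using this
        rw [dotProduct_smul, horth']
        simp
      · intro hlmem
        exact absurd (Finset.mem_Icc.mpr hl) hlmem
    rw [hS, hqC' l hl1 hld]
    simp only [smul_eq_mul]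
    ring
  refine ⟨⟨pow_pos hγ0 2, hγ1⟩, ?_⟩
  intro t
  induction t with
  | zero =>
    simp
  | succ t ih =>
    have hr := hbound t
    set r := (x t) ⬝ᵥ C.mulVec (x t) with hrdef
    have hrecsum : ∑ l ∈ Finset.Icc 1 (k - 1), ((q l : Fin d → ℝ) ⬝ᵥ (x (t + 1) : Fin d → ℝ)) ^ 2
        = (1 - α * r) ^ 2 * ∑ l ∈ Finset.Icc 1 (k - 1), ((q l : Fin d → ℝ) ⬝ᵥ (x t : Fin d → ℝ)) ^ 2 := by
      rw [Finset.mul_sum]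
      apply Finset.sum_congr rfl
      intro l hl
      rw [hstep t l hl]
      ring
    have hfac : (1 - α * r) ^ 2 ≤ (1 - α * η) ^ 2 := by
      have h1 : 0 ≤ 1 - α * r := by
        have h2 : α * r < α * (1 / α) := mul_lt_mul_of_pos_left hr.2 hα
        rw [mul_one_div_cancel hα.ne'] at h2
        linarith
      have h2 : 1 - α * r ≤ 1 - α * η := by
        have := mul_lt_mul_of_pos_left hr.1 hα
        linarith
      exact pow_le_pow_left₀ h1 h2 2
    have hnn : 0 ≤ ∑ l ∈ Finset.Icc 1 (k - 1), ((q l : Fin d → ℝ) ⬝ᵥ (x t : Fin d → ℝ)) ^ 2 :=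
      Finset.sum_nonneg fun l _ => sq_nonneg _
    calc ∑ l ∈ Finset.Icc 1 (k - 1), ((q l : Fin d → ℝ) ⬝ᵥ (x (t + 1) : Fin d → ℝ)) ^ 2
        = (1 - α * r) ^ 2 * ∑ l ∈ Finset.Icc 1 (k - 1), ((q l : Fin d → ℝ) ⬝ᵥ (x t : Fin d → ℝ)) ^ 2 := hrecsum
      _ ≤ (1 - α * η) ^ 2 * ∑ l ∈ Finset.Icc 1 (k - 1), ((q l : Fin d → ℝ) ⬝ᵥ (x t : Fin d → ℝ)) ^ 2 :=
          mul_le_mul_of_nonneg_right hfac hnn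
      _ ≤ (1 - α * η) ^ 2 * ((∑ l ∈ Finset.Icc 1 (k - 1), ((q l : Fin d → ℝ) ⬝ᵥ (x 0 : Fin d → ℝ)) ^ 2) * ((1 - α * η) ^ 2) ^ t) :=
          mul_le_mul_of_nonneg_left ih (sq_nonneg _)
      _ = (∑ l ∈ Finset.Icc 1 (k - 1), ((q l : Fin d → ℝ) ⬝ᵥ (x 0 : Fin d → ℝ)) ^ 2) * ((1 - α * η) ^ 2) ^ (t + 1) := by
          ring
end

section
/- Suppose q_kᵀ x_k^{(0)} ≠ 0, ‖x_k^{(0)}‖ = 1, and for all t ≥ 0 the iterates satisfy ‖x_k^{(t)}‖ ≤ √3 and (x_k^{(t)})ᵀ C x_k^{(t)} < 1/α. Then with ρ_k = ((1 + αλ_{k+1})/(1 + αλ_k))² < 1 and a_2 = 3(d−k)/(q_kᵀ x_k^{(0)})², one has for all t ≥ 0: Σ_{l=k+1}^{d} (z_{k,l}^{(t)})² ≤ a_2 ρ_k^t. -/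
open Matrix Finset

set_option maxHeartbeats 1000000 in
/-- Lemma 4 of the paper: linear decay of the higher-order
eigenbasis coefficients `z_{k,l}^{(t)} = q_lᵀ x_k^{(t)}`, `l = k+1, …, d`, of the
modified GHA iterates, with rate `ρ_k = ((1+αλ_{k+1})/(1+αλ_k))² < 1` and constant
`a₂ = 3(d−k)/(q_kᵀ x_k^{(0)})²`. -/
theorem modified_GHA_upper_coeff_decay
    (d K : ℕ) (hK1 : 1 ≤ K) (hKd : K < d)
    (C : Matrix (Fin d) (Fin d) ℝ) (hC : C.PosSemidef)
    (lam : ℕ → ℝ) (q : ℕ → EuclideanSpace ℝ (Fin d))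
    (horth : ∀ l l', 1 ≤ l → l ≤ d → 1 ≤ l' → l' ≤ d →
      (q l) ⬝ᵥ (q l' : Fin d → ℝ) = if l = l' then 1 else 0)
    (heig : ∀ l, 1 ≤ l → l ≤ d → C.mulVec (q l) = lam l • (q l : Fin d → ℝ))
    (hstrict : ∀ l l', 1 ≤ l → l < l' → l' ≤ d → l ≤ K → lam l' < lam l)
    (hmono : ∀ l l', 1 ≤ l → l ≤ l' → l' ≤ d → lam l' ≤ lam l)
    (hnonneg : ∀ l, 1 ≤ l → l ≤ d → 0 ≤ lam l)
    (hKpos : 0 < lam K)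
    (k : ℕ) (hk1 : 1 ≤ k) (hkK : k ≤ K)
    (α : ℝ) (hα : 0 < α)
    (x : ℕ → EuclideanSpace ℝ (Fin d))
    (hiter : ∀ t, x (t + 1) = x t + α •
      (toE (C.mulVec (x t)) - ((x t) ⬝ᵥ C.mulVec (x t)) • x t
        - ∑ p ∈ Finset.Icc 1 (k - 1), ((q p) ⬝ᵥ C.mulVec (x t)) • q p))
    (hinit : (q k) ⬝ᵥ (x 0 : Fin d → ℝ) ≠ 0)
    (hnorm0 : ‖x 0‖ = 1)
    (hbound : ∀ t, ‖x t‖ ≤ Real.sqrt 3 ∧ (x t) ⬝ᵥ C.mulVec (x t) < 1 / α) :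
    ((1 + α * lam (k + 1)) / (1 + α * lam k)) ^ 2 < 1 ∧
      ∀ t, ∑ l ∈ Finset.Icc (k + 1) d, ((q l) ⬝ᵥ (x t : Fin d → ℝ)) ^ 2 ≤
        (3 * ((d : ℝ) - (k : ℝ)) / ((q k) ⬝ᵥ (x 0 : Fin d → ℝ)) ^ 2)
          * (((1 + α * lam (k + 1)) / (1 + α * lam k)) ^ 2) ^ t := by
  have hkd : k < d := lt_of_le_of_lt hkK hKd
  have hk1d : k + 1 ≤ d := hkd
  have dotE : ∀ u v : EuclideanSpace ℝ (Fin d),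
      (u : Fin d → ℝ) ⬝ᵥ (v : Fin d → ℝ) = inner ℝ u v := by
    intro u v
    simp [dotProduct, PiLp.inner_apply, RCLike.inner_apply, mul_comm]
  -- basic eigenvalue facts
  have hlamk1 : 0 ≤ lam (k + 1) := hnonneg (k + 1) (by omega) hk1d
  have hlamk : 0 ≤ lam k := hnonneg k hk1 hkd.le
  set A : ℝ := 1 + α * lam (k + 1) with hAdef
  set B : ℝ := 1 + α * lam k with hBdef
  have hA : 0 < A := by have := mul_nonneg hα.le hlamk1; simp [hAdef]; linarith
  have hB : 0 < B := by have := mul_nonneg hα.le hlamk; simp [hBdef]; linarith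
  have hABlt : A < B := by
    have := hstrict k (k + 1) hk1 (Nat.lt_succ_self k) hk1d hkK
    have := mul_lt_mul_of_pos_left this hα
    simp [hAdef, hBdef]; linarith
  set ρ : ℝ := (A / B) ^ 2 with hρdef
  have hr0 : 0 ≤ A / B := div_nonneg hA.le hB.le
  have hr1 : A / B < 1 := (div_lt_one hB).2 hABlt
  have hρ0 : 0 ≤ ρ := sq_nonneg _
  have hρ1 : ρ < 1 := by
    have := pow_lt_one₀ hr0 hr1 (two_ne_zero)
    simpa [hρdef] using this
  refine ⟨hρ1, ?_⟩
  -- σ facts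
  have hσ0 : ∀ t, 0 ≤ (x t) ⬝ᵥ C.mulVec (x t) := by
    intro t
    have := hC.dotProduct_mulVec_nonneg (x t)
    simpa using this
  have hσα : ∀ t, α * ((x t) ⬝ᵥ C.mulVec (x t)) < 1 := by
    intro t
    have h := (hbound t).2
    rw [lt_div_iff₀ hα] at h
    linarith [h]
  -- symmetry of C
  have hCsym : ∀ i j, C i j = C j i := by
    intro i j
    have h := hC.1
    have := congrFun (congrFun h j) i
    simpa [Matrix.conjTranspose_apply] using this
  -- eigenvector dot products
  have hCq : ∀ l (v : Fin d → ℝ), 1 ≤ l → l ≤ d →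
      (q l) ⬝ᵥ C.mulVec v = lam l * ((q l) ⬝ᵥ v) := by
    intro l v h1 h2
    rw [Matrix.dotProduct_mulVec]
    have hvec : C.vecMul (q l) = lam l • (q l : Fin d → ℝ) := by
      rw [← heig l h1 h2]
      ext j
      simp only [Matrix.vecMul, Matrix.mulVec, dotProduct]
      exact Finset.sum_congr rfl fun i _ => by rw [hCsym i j]; ring
    rw [hvec, smul_dotProduct]
    ring_nf
  -- the coefficient recurrence
  have hz : ∀ t l, k ≤ l → l ≤ d →
      (q l) ⬝ᵥ (x (t + 1) : Fin d → ℝ)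
        = (1 + α * (lam l - (x t) ⬝ᵥ C.mulVec (x t))) * ((q l) ⬝ᵥ (x t : Fin d → ℝ)) := by
    intro t l hkl hld
    have h1l : 1 ≤ l := hk1.trans hkl
    have hqq : ∀ p ∈ Finset.Icc 1 (k - 1), ((q p) ⬝ᵥ C.mulVec (x t : Fin d → ℝ)) * (inner ℝ (q l) (q p) : ℝ) = 0 := by
      intro p hp
      simp only [Finset.mem_Icc] at hp
      have hlp : l ≠ p := by omega
      have h0 : (q l) ⬝ᵥ (q p : Fin d → ℝ) = 0 := by
        have := horth l p h1l hld hp.1 (by omega)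
        simpa [hlp] using this
      rw [← dotE, h0, mul_zero]
    rw [dotE, hiter t, inner_add_right, real_inner_smul_right, inner_sub_right,
      inner_sub_right, real_inner_smul_right, inner_sum]
    simp only [real_inner_smul_right]
    rw [Finset.sum_eq_zero hqq]
    rw [← dotE (q l) (x t), ← dotE (q l) (toE (C.mulVec (x t)))]
    have htoE : (toE (C.mulVec (x t)) : Fin d → ℝ) = C.mulVec (x t) := rfl
    rw [htoE, hCq l _ h1l hld]
    ring
  -- positivity and ratio of the multipliers
  have hcpos : ∀ t l, 1 ≤ l → l ≤ d →
      0 < 1 + α * (lam l - (x t) ⬝ᵥ C.mulVec (x t)) := by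
    intro t l h1 h2
    have := hσα t
    have := mul_nonneg hα.le (hnonneg l h1 h2)
    nlinarith
  have hratio : ∀ t l, k + 1 ≤ l → l ≤ d →
      1 + α * (lam l - (x t) ⬝ᵥ C.mulVec (x t))
        ≤ (A / B) * (1 + α * (lam k - (x t) ⬝ᵥ C.mulVec (x t))) := by
    intro t l h1 h2
    rw [div_mul_eq_mul_div, le_div_iff₀ hB]
    have hml : lam l ≤ lam (k + 1) := hmono (k + 1) l (by omega) h1 h2
    have hmk : lam (k + 1) ≤ lam k := (hstrict k (k + 1) hk1 (Nat.lt_succ_self k) hk1d hkK).le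
    have hs0 := hσ0 t
    have hsα := hσα t
    simp only [hAdef, hBdef]
    nlinarith [mul_nonneg hα.le hs0, mul_le_mul_of_nonneg_left hml hα.le,
      mul_le_mul_of_nonneg_left hmk hα.le]
  -- Cauchy–Schwarz
  have hzsq : ∀ l (v : EuclideanSpace ℝ (Fin d)), 1 ≤ l → l ≤ d →
      ((q l) ⬝ᵥ (v : Fin d → ℝ)) ^ 2 ≤ ‖v‖ ^ 2 := by
    intro l v h1 h2
    have hq : ‖q l‖ ^ 2 = 1 := by
      rw [← real_inner_self_eq_norm_sq, ← dotE]
      simpa using horth l l h1 h2 h1 h2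
    have h3 := abs_real_inner_le_norm (q l) v
    rw [dotE]
    nlinarith [abs_nonneg (inner ℝ (q l) v : ℝ), sq_abs (inner ℝ (q l) v : ℝ),
      norm_nonneg v, norm_nonneg (q l)]
  have hzk3 : ∀ t, ((q k) ⬝ᵥ (x t : Fin d → ℝ)) ^ 2 ≤ 3 := by
    intro t
    have h1 := hzsq k (x t) hk1 hkd.le
    have h2 := (hbound t).1
    nlinarith [norm_nonneg (x t), Real.sq_sqrt (by norm_num : (0:ℝ) ≤ 3),
      Real.sqrt_nonneg 3]
  have hzl1 : ∀ l, 1 ≤ l → l ≤ d → ((q l) ⬝ᵥ (x 0 : Fin d → ℝ)) ^ 2 ≤ 1 := by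
    intro l h1 h2
    have := hzsq l (x 0) h1 h2
    rw [hnorm0] at this
    simpa using this
  -- main induction
  have main : ∀ t, ∀ l, k + 1 ≤ l → l ≤ d →
      ((q l) ⬝ᵥ (x t : Fin d → ℝ)) ^ 2 * ((q k) ⬝ᵥ (x 0 : Fin d → ℝ)) ^ 2
        ≤ ρ ^ t * (((q l) ⬝ᵥ (x 0 : Fin d → ℝ)) ^ 2 * ((q k) ⬝ᵥ (x t : Fin d → ℝ)) ^ 2) := by
    intro t
    induction t with
    | zero => intro l _ _; rw [pow_zero, one_mul]
    | succ t ih =>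
      intro l h1 h2
      have ihl := ih l h1 h2
      have hzl := hz t l (by omega) h2
      have hzk := hz t k le_rfl hkd.le
      rw [hzl, hzk]
      have hcl := hcpos t l (by omega) h2
      have hck := hcpos t k hk1 hkd.le
      have hrat := hratio t l h1 h2
      have hsq : (1 + α * (lam l - (x t) ⬝ᵥ C.mulVec (x t))) ^ 2
          ≤ ρ * (1 + α * (lam k - (x t) ⬝ᵥ C.mulVec (x t))) ^ 2 := by
        have h := mul_le_mul hrat hrat hcl.le
          (mul_nonneg hr0 hck.le)
        calc (1 + α * (lam l - (x t) ⬝ᵥ C.mulVec (x t))) ^ 2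
            ≤ ((A / B) * (1 + α * (lam k - (x t) ⬝ᵥ C.mulVec (x t)))) ^ 2 := by
              rw [sq, sq]; exact h
          _ = ρ * (1 + α * (lam k - (x t) ⬝ᵥ C.mulVec (x t))) ^ 2 := by
              rw [hρdef]; ring
      calc ((1 + α * (lam l - (x t) ⬝ᵥ C.mulVec (x t))) * ((q l) ⬝ᵥ (x t : Fin d → ℝ))) ^ 2
            * ((q k) ⬝ᵥ (x 0 : Fin d → ℝ)) ^ 2
          = (1 + α * (lam l - (x t) ⬝ᵥ C.mulVec (x t))) ^ 2
            * (((q l) ⬝ᵥ (x t : Fin d → ℝ)) ^ 2 * ((q k) ⬝ᵥ (x 0 : Fin d → ℝ)) ^ 2) := by ring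
        _ ≤ (1 + α * (lam l - (x t) ⬝ᵥ C.mulVec (x t))) ^ 2
            * (ρ ^ t * (((q l) ⬝ᵥ (x 0 : Fin d → ℝ)) ^ 2 * ((q k) ⬝ᵥ (x t : Fin d → ℝ)) ^ 2)) :=
            mul_le_mul_of_nonneg_left ihl (sq_nonneg _)
        _ ≤ (ρ * (1 + α * (lam k - (x t) ⬝ᵥ C.mulVec (x t))) ^ 2)
            * (ρ ^ t * (((q l) ⬝ᵥ (x 0 : Fin d → ℝ)) ^ 2 * ((q k) ⬝ᵥ (x t : Fin d → ℝ)) ^ 2)) := by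
            apply mul_le_mul_of_nonneg_right hsq
            positivity
        _ = ρ ^ (t + 1) * (((q l) ⬝ᵥ (x 0 : Fin d → ℝ)) ^ 2
            * ((1 + α * (lam k - (x t) ⬝ᵥ C.mulVec (x t))) * ((q k) ⬝ᵥ (x t : Fin d → ℝ))) ^ 2) := by
            ring
  -- conclusion
  intro t
  have hzk0 : 0 < ((q k) ⬝ᵥ (x 0 : Fin d → ℝ)) ^ 2 :=
    lt_of_le_of_ne (sq_nonneg _) (Ne.symm (pow_ne_zero _ hinit))
  rw [div_mul_eq_mul_div, le_div_iff₀ hzk0]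
  have hcard : (Finset.Icc (k + 1) d).card = d - k := by
    rw [Nat.card_Icc]; omega
  calc (∑ l ∈ Finset.Icc (k + 1) d, ((q l) ⬝ᵥ (x t : Fin d → ℝ)) ^ 2)
        * ((q k) ⬝ᵥ (x 0 : Fin d → ℝ)) ^ 2
      = ∑ l ∈ Finset.Icc (k + 1) d,
          ((q l) ⬝ᵥ (x t : Fin d → ℝ)) ^ 2 * ((q k) ⬝ᵥ (x 0 : Fin d → ℝ)) ^ 2 := by
        rw [Finset.sum_mul]
    _ ≤ ∑ l ∈ Finset.Icc (k + 1) d, 3 * ρ ^ t := by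
        apply Finset.sum_le_sum
        intro l hl
        simp only [Finset.mem_Icc] at hl
        have h1 := main t l hl.1 hl.2
        have h2 := hzl1 l (by omega) hl.2
        have h3 := hzk3 t
        have h4 : 0 ≤ ρ ^ t := pow_nonneg hρ0 t
        have hab : ((q l) ⬝ᵥ (x 0 : Fin d → ℝ)) ^ 2 * ((q k) ⬝ᵥ (x t : Fin d → ℝ)) ^ 2 ≤ 3 := by
          nlinarith [sq_nonneg ((q l) ⬝ᵥ (x 0 : Fin d → ℝ)),
            sq_nonneg ((q k) ⬝ᵥ (x t : Fin d → ℝ))]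
        have h5 := mul_le_mul_of_nonneg_left hab h4
        linarith
    _ = ((d - k : ℕ) : ℝ) * (3 * ρ ^ t) := by
        rw [Finset.sum_const, hcard, nsmul_eq_mul]
    _ = 3 * ((d : ℝ) - (k : ℝ)) * ρ ^ t := by
        rw [Nat.cast_sub hkd.le]; ring
end

section
/- Suppose q_kᵀ x_k^{(0)} ≠ 0, ‖x_k^{(0)}‖ = 1, and for all t ≥ 0 the iterates satisfy ‖x_k^{(t)}‖ ≤ √3 and η < (x_k^{(t)})ᵀ C x_k^{(t)} < 1/α, where η = min{ (1 − 3αλ_1)² λ_m , (x̃_k^{(0)})ᵀ C x̃_k^{(0)} } > 0. Then the Rayleigh quotient converges to λ_k at a linear rate: there exist constants a_4 > 0 and θ ∈ (0,1) such that for all t ≥ 0, |λ_k − (x_k^{(t)})ᵀ C x_k^{(t)}| ≤ a_4 θ^t. -/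
open Matrix Finset

set_option maxHeartbeats 4000000

private lemma sum_dotProduct' {n : ℕ} {ι : Type*} (s : Finset ι) (f : ι → (Fin n → ℝ))
    (w : Fin n → ℝ) : (∑ p ∈ s, f p) ⬝ᵥ w = ∑ p ∈ s, f p ⬝ᵥ w := by
  classical
  induction s using Finset.induction_on with
  | empty => simp
  | insert _ _ h ih => rw [Finset.sum_insert h, Finset.sum_insert h, add_dotProduct, ih]

/-- Lemma 5 of the paper: linear convergence of the Rayleigh
quotient of the modified GHA iterates to `λ_k`. -/
theorem modified_GHA_rayleigh_convergence
    (d K : ℕ) (hK1 : 1 ≤ K) (hKd : K < d)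
    (C : Matrix (Fin d) (Fin d) ℝ) (hC : C.PosSemidef)
    (lam : ℕ → ℝ) (q : ℕ → EuclideanSpace ℝ (Fin d))
    (horth : ∀ l l', 1 ≤ l → l ≤ d → 1 ≤ l' → l' ≤ d →
      (q l) ⬝ᵥ (q l' : Fin d → ℝ) = if l = l' then 1 else 0)
    (heig : ∀ l, 1 ≤ l → l ≤ d → C.mulVec (q l) = lam l • (q l : Fin d → ℝ))
    (hstrict : ∀ l l', 1 ≤ l → l < l' → l' ≤ d → l ≤ K → lam l' < lam l)
    (hmono : ∀ l l', 1 ≤ l → l ≤ l' → l' ≤ d → lam l' ≤ lam l)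
    (hnonneg : ∀ l, 1 ≤ l → l ≤ d → 0 ≤ lam l)
    (hKpos : 0 < lam K)
    (k : ℕ) (hk1 : 1 ≤ k) (hkK : k ≤ K)
    (α : ℝ) (hα : 0 < α)
    (x : ℕ → EuclideanSpace ℝ (Fin d))
    (hiter : ∀ t, x (t + 1) = x t + α •
      (toE (C.mulVec (x t)) - ((x t) ⬝ᵥ C.mulVec (x t)) • x t
        - ∑ p ∈ Finset.Icc 1 (k - 1), ((q p) ⬝ᵥ C.mulVec (x t)) • q p))
    -- `λ_m` : the smallest nonzero eigenvalue of `C`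
    (m : ℕ) (hm1 : 1 ≤ m) (hmd : m ≤ d) (hmne : lam m ≠ 0)
    (hmsmall : ∀ l, 1 ≤ l → l ≤ d → lam l ≠ 0 → lam m ≤ lam l)
    -- `η = min{(1 − 3αλ₁)² λ_m, (x̃_k^{(0)})ᵀ C x̃_k^{(0)}}`
    (η : ℝ)
    (hη : η = min ((1 - 3 * α * lam 1) ^ 2 * lam m)
        ((∑ l ∈ Finset.Icc k d, ((q l) ⬝ᵥ (x 0 : Fin d → ℝ)) • q l) ⬝ᵥ
          C.mulVec (∑ l ∈ Finset.Icc k d, ((q l) ⬝ᵥ (x 0 : Fin d → ℝ)) • q l)))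
    (hηpos : 0 < η)
    (hinit : (q k) ⬝ᵥ (x 0 : Fin d → ℝ) ≠ 0)
    (hnorm0 : ‖x 0‖ = 1)
    (hbound : ∀ t, ‖x t‖ ≤ Real.sqrt 3 ∧
      η < (x t) ⬝ᵥ C.mulVec (x t) ∧ (x t) ⬝ᵥ C.mulVec (x t) < 1 / α) :
    ∃ a₄ > (0:ℝ), ∃ θ ∈ Set.Ioo (0:ℝ) 1,
      ∀ t, |lam k - (x t) ⬝ᵥ C.mulVec (x t)| ≤ a₄ * θ ^ t := by
  classical
  clear hη hmne hmsmall hm1 hmd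
  have hd0 : 0 < d := by omega
  have hkd : k ≤ d := by omega
  have hk1d : k + 1 ≤ d := by omega
  set R : ℕ → ℝ := fun t => (x t : Fin d → ℝ) ⬝ᵥ C.mulVec (x t) with hRdef
  set z : ℕ → ℕ → ℝ := fun t l => (q l : Fin d → ℝ) ⬝ᵥ (x t : Fin d → ℝ) with hzdef
  -- symmetry of C
  have hCs : Cᵀ = C := by
    rw [← Matrix.conjTranspose_eq_transpose_of_trivial]; exact hC.1
  have hqC : ∀ l, 1 ≤ l → l ≤ d → ∀ w : Fin d → ℝ,
      (q l : Fin d → ℝ) ⬝ᵥ C.mulVec w = lam l * ((q l : Fin d → ℝ) ⬝ᵥ w) := by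
    intro l h1 h2 w
    rw [dotProduct_mulVec, ← Matrix.mulVec_transpose, hCs, heig l h1 h2, smul_dotProduct]
    rfl
  -- orthonormal basis expansion
  have hexp : ∀ v : EuclideanSpace ℝ (Fin d),
      (v : Fin d → ℝ) = ∑ i : Fin d, ((q (i+1) : Fin d → ℝ) ⬝ᵥ v) • (q (i+1) : Fin d → ℝ) := by
    have hQon : Orthonormal ℝ (fun i : Fin d => q (i+1)) := by
      rw [orthonormal_iff_ite]
      intro i j
      have h := horth (i+1) (j+1) (by omega) (by omega) (by omega) (by omega)
      have hin : (inner ℝ (q ((i:ℕ)+1)) (q ((j:ℕ)+1)) : ℝ)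
          = (q ((i:ℕ)+1) : Fin d → ℝ) ⬝ᵥ q ((j:ℕ)+1) := by
        simp [PiLp.inner_apply, dotProduct, mul_comm]
      rw [hin, h]
      by_cases hij : i = j
      · simp [hij]
      · have : ¬ ((i:ℕ)+1 = (j:ℕ)+1) := by intro hc; exact hij (Fin.ext (by omega))
        rw [if_neg this, if_neg hij]
    haveI : Nonempty (Fin d) := ⟨⟨0, hd0⟩⟩
    have hcard : Fintype.card (Fin d) = Module.finrank ℝ (EuclideanSpace ℝ (Fin d)) := by
      simp [finrank_euclideanSpace]
    let B : Module.Basis (Fin d) ℝ (EuclideanSpace ℝ (Fin d)) :=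
      basisOfOrthonormalOfCardEqFinrank hQon hcard
    have hB : ⇑B = fun i : Fin d => q (i+1) := coe_basisOfOrthonormalOfCardEqFinrank _ _
    let OB : OrthonormalBasis (Fin d) ℝ (EuclideanSpace ℝ (Fin d)) :=
      B.toOrthonormalBasis (by rw [hB]; exact hQon)
    have hOB : ⇑OB = fun i : Fin d => q (i+1) := by
      simp only [OB, Module.Basis.coe_toOrthonormalBasis, hB]
    intro v
    have hs := OB.sum_repr' v
    rw [hOB] at hs
    conv_lhs => rw [← hs]
    simp only [EuclideanSpace.inner_eq_star_dotProduct, star_trivial]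
    ext j
    simp [Finset.sum_apply, dotProduct_comm]
  -- Rayleigh quotient in coordinates
  have hRsum : ∀ t, R t = ∑ i : Fin d, lam ((i:ℕ)+1) * (z t ((i:ℕ)+1))^2 := by
    intro t
    have h1 : R t = (x t : Fin d → ℝ) ⬝ᵥ C.mulVec (x t) := rfl
    have key : ∀ w : Fin d → ℝ, (x t : Fin d → ℝ) ⬝ᵥ C.mulVec w
        = ∑ i : Fin d, (z t ((i:ℕ)+1)) * ((q ((i:ℕ)+1) : Fin d → ℝ) ⬝ᵥ C.mulVec w) := by
      intro w
      conv_lhs => rw [hexp (x t)]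
      rw [sum_dotProduct']
      exact Finset.sum_congr rfl fun i _ => smul_dotProduct _ _ _
    rw [h1, key (x t)]
    refine Finset.sum_congr rfl fun i _ => ?_
    rw [hqC ((i:ℕ)+1) (by omega) (by omega) (x t)]
    show z t ((i:ℕ)+1) * (lam ((i:ℕ)+1) * z t ((i:ℕ)+1)) = _
    ring
  -- coordinate recursion
  have hzrec : ∀ t l, 1 ≤ l → l ≤ d →
      z (t+1) l = (1 + α * (lam l - R t) - (if l < k then α * lam l else 0)) * z t l := by
    intro t l h1 h2
    let L : EuclideanSpace ℝ (Fin d) →ₗ[ℝ] ℝ :=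
      { toFun := fun v => (q l : Fin d → ℝ) ⬝ᵥ (v : Fin d → ℝ)
        map_add' := fun a b => dotProduct_add _ _ _
        map_smul' := fun c a => by
          show (q l : Fin d → ℝ) ⬝ᵥ ((c • a : EuclideanSpace ℝ (Fin d)) : Fin d → ℝ)
            = c * ((q l : Fin d → ℝ) ⬝ᵥ (a : Fin d → ℝ))
          exact dotProduct_smul c _ a }
    have hL : ∀ v : EuclideanSpace ℝ (Fin d), L v = (q l : Fin d → ℝ) ⬝ᵥ (v : Fin d → ℝ) :=
      fun v => rfl
    have h3 : z (t+1) l = L (x (t+1)) := rfl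
    rw [h3, hiter t, map_add, _root_.map_smul, map_sub, map_sub, _root_.map_smul, map_sum]
    have h4 : L (toE (C.mulVec (x t))) = lam l * z t l := by
      rw [hL]
      exact hqC l h1 h2 (x t)
    have h5 : L (x t) = z t l := rfl
    have h6 : ∀ p ∈ Finset.Icc 1 (k-1),
        L (((q p : Fin d → ℝ) ⬝ᵥ C.mulVec (x t)) • q p)
          = if l = p then lam l * z t l else 0 := by
      intro p hp
      rw [Finset.mem_Icc] at hp
      have hpd : p ≤ d := by omega
      rw [_root_.map_smul, hL, horth l p h1 h2 hp.1 hpd, hqC p hp.1 hpd (x t)]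
      by_cases hlp : l = p
      · subst hlp; simp [z]
      · simp [hlp]
    rw [Finset.sum_congr rfl h6, Finset.sum_ite_eq (Finset.Icc 1 (k-1)) l
      (fun _ => lam l * z t l)]
    have hmem : l ∈ Finset.Icc 1 (k-1) ↔ l < k := by
      rw [Finset.mem_Icc]; omega
    by_cases hlk : l < k
    · rw [if_pos (hmem.mpr hlk), if_pos hlk, h4, h5]
      show z t l + α * (lam l * z t l - R t * z t l - lam l * z t l) = _
      ring
    · rw [if_neg (fun hc => hlk (hmem.mp hc)), if_neg hlk, h4, h5]
      show z t l + α * (lam l * z t l - R t * z t l - 0) = _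
      ring
  have hRt : ∀ t, (x t : Fin d → ℝ) ⬝ᵥ C.mulVec (x t) = R t := fun t => rfl
  have hz0ne : z 0 k ≠ 0 := hinit
  -- basic scalar facts
  have hηR : ∀ t, η < R t := fun t => (hbound t).2.1
  have hRpos : ∀ t, 0 < R t := fun t => lt_trans hηpos (hηR t)
  have hR1 : ∀ t, α * R t < 1 := by
    intro t
    have h := (hbound t).2.2
    rw [hRt t, lt_div_iff₀ hα, mul_comm] at h
    exact h
  have hαη : α * η < 1 := by linarith [mul_lt_mul_of_pos_left (hηR 0) hα, hR1 0]
  have hαηpos : 0 < α * η := mul_pos hα hηpos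
  clear_value R z
  set A1 : ℝ := 1 - α * η with hA1def
  clear_value A1
  have hA1pos : 0 < A1 := by rw [hA1def]; linarith
  have hA1lt1 : A1 < 1 := by rw [hA1def]; linarith
  have hAt : ∀ t, 0 < 1 - α * R t := fun t => by linarith [hR1 t]
  have hAtle : ∀ t, 1 - α * R t < A1 := by
    intro t; rw [hA1def]; linarith [mul_lt_mul_of_pos_left (hηR t) hα]
  -- eigenvalue facts
  have hlamtop : ∀ l, 1 ≤ l → l ≤ d → lam l ≤ lam 1 := fun l h1 h2 => hmono 1 l le_rfl h1 h2
  have hlamk : 0 < lam k := lt_of_lt_of_le hKpos (hmono k K hk1 hkK (by omega))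
  have hgap : lam (k+1) < lam k := hstrict k (k+1) hk1 (by omega) hk1d hkK
  set b : ℝ := α * lam k with hbdef
  clear_value b
  have hb0 : 0 < b := by rw [hbdef]; exact mul_pos hα hlamk
  set y : ℕ → ℝ := fun t => (z t k)^2 with hydef
  clear_value y
  have hy0 : 0 < y 0 := by
    simp only [hydef]
    positivity
  have hzk : ∀ t, z (t+1) k = (1 + α * (lam k - R t)) * z t k := by
    intro t
    rw [hzrec t k hk1 hkd, if_neg (lt_irrefl k)]
    ring
  have hyrec : ∀ t, y (t+1) = (1 + α * (lam k - R t))^2 * y t := by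
    intro t; simp only [hydef]; rw [hzk t]; ring
  have hρpos : ∀ t, 0 < 1 + α * (lam k - R t) := by
    intro t
    have h1 : 1 + α * (lam k - R t) = (1 - α * R t) + b := by rw [hbdef]; ring
    rw [h1]; linarith [hAt t, hb0]
  have hρgtb : ∀ t, b < 1 + α * (lam k - R t) := by
    intro t
    have h1 : 1 + α * (lam k - R t) = (1 - α * R t) + b := by rw [hbdef]; ring
    rw [h1]; linarith [hAt t]
  have hypos : ∀ t, 0 < y t := by
    intro t; induction t with
    | zero => exact hy0
    | succ n ih => rw [hyrec n]; exact mul_pos (pow_pos (hρpos n) 2) ih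
  -- Cauchy-Schwarz bound
  have hz3 : ∀ t l, 1 ≤ l → l ≤ d → (z t l)^2 ≤ 3 := by
    intro t l h1 h2
    have hq1 : (q l : Fin d → ℝ) ⬝ᵥ q l = 1 := by rw [horth l l h1 h2 h1 h2]; simp
    have hnq : ‖q l‖ = 1 := by
      have h3 : ‖q l‖^2 = 1 := by
        rw [← real_inner_self_eq_norm_sq]
        have h4 : (inner ℝ (q l) (q l) : ℝ) = (q l : Fin d → ℝ) ⬝ᵥ q l := by
          rw [EuclideanSpace.inner_eq_star_dotProduct, star_trivial]
        rw [h4, hq1]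
      have h5 : (‖q l‖ - 1) * (‖q l‖ + 1) = 0 := by linear_combination h3
      rcases mul_eq_zero.mp h5 with h6 | h6
      · linarith
      · linarith [norm_nonneg (q l)]
    have hcs : |(inner ℝ (q l) (x t) : ℝ)| ≤ ‖q l‖ * ‖x t‖ := abs_real_inner_le_norm _ _
    have hiq : (inner ℝ (q l) (x t) : ℝ) = z t l := by
      simp [hzdef, PiLp.inner_apply, dotProduct, mul_comm]
    have hxt := (hbound t).1
    have h3 : |z t l| ≤ Real.sqrt 3 := by
      rw [← hiq]
      calc |(inner ℝ (q l) (x t) : ℝ)| ≤ ‖q l‖ * ‖x t‖ := hcs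
      _ = ‖x t‖ := by rw [hnq]; ring
      _ ≤ Real.sqrt 3 := hxt
    have hs3 : (Real.sqrt 3)^2 = 3 := Real.sq_sqrt (by norm_num)
    calc (z t l)^2 = |z t l|^2 := (sq_abs _).symm
    _ ≤ (Real.sqrt 3)^2 := by
        apply pow_le_pow_left₀ (abs_nonneg _) h3
    _ = 3 := hs3
  have hy3 : ∀ t, y t ≤ 3 := by
    intro t; simp only [hydef]; exact hz3 t k hk1 hkd
  -- b ≤ 1
  have hble1 : b ≤ 1 := by
    by_contra hb1
    push_neg at hb1
    have hgrow : ∀ t, (b^2)^t * y 0 ≤ y t := by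
      intro t; induction t with
      | zero => simp
      | succ n ih =>
        rw [hyrec n]
        have h1 : b^2 ≤ (1 + α*(lam k - R n))^2 :=
          pow_le_pow_left₀ hb0.le (hρgtb n).le 2
        calc (b^2)^(n+1) * y 0 = b^2 * ((b^2)^n * y 0) := by ring
        _ ≤ b^2 * y n := mul_le_mul_of_nonneg_left ih (sq_nonneg b)
        _ ≤ (1 + α*(lam k - R n))^2 * y n := mul_le_mul_of_nonneg_right h1 (hypos n).le
    obtain ⟨t, ht⟩ := pow_unbounded_of_one_lt (3 / y 0)
      (by nlinarith [hb0] : (1:ℝ) < b^2)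
    have h4 : 3 / y 0 * y 0 < (b^2)^t * y 0 := mul_lt_mul_of_pos_right ht hy0
    rw [div_mul_cancel₀ _ (ne_of_gt hy0)] at h4
    linarith [hgrow t, hy3 t]
    -- the residual δ
  set i0 : Fin d := ⟨k-1, by omega⟩ with hi0def
  have hi0 : (i0:ℕ)+1 = k := by simp only [hi0def]; omega
  set δ : ℕ → ℝ := fun t => R t - lam k * y t with hδdef
  clear_value δ
  have hδsum : ∀ t, δ t = ∑ i ∈ Finset.univ.erase i0, lam ((i:ℕ)+1) * (z t ((i:ℕ)+1))^2 := by
    intro t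
    have h1 : ∑ i ∈ Finset.univ.erase i0, lam ((i:ℕ)+1) * (z t ((i:ℕ)+1))^2
        + lam ((i0:ℕ)+1) * (z t ((i0:ℕ)+1))^2 = ∑ i : Fin d, lam ((i:ℕ)+1) * (z t ((i:ℕ)+1))^2 :=
      Finset.sum_erase_add Finset.univ
        (fun i : Fin d => lam ((i:ℕ)+1) * (z t ((i:ℕ)+1))^2) (Finset.mem_univ i0)
    rw [hi0] at h1
    simp only [hδdef]
    rw [hRsum t, ← h1]
    simp only [hydef]
    ring
  have hδnn : ∀ t, 0 ≤ δ t := by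
    intro t
    rw [hδsum t]
    apply Finset.sum_nonneg
    intro i _
    exact mul_nonneg (hnonneg _ (by omega) (Nat.succ_le_of_lt i.isLt)) (sq_nonneg _)
  -- decay of low components
  have hlow : ∀ l, 1 ≤ l → l < k → ∀ t, (z t l)^2 ≤ (A1^2)^t * (z 0 l)^2 := by
    intro l h1 h2 t
    induction t with
    | zero => simp
    | succ n ih =>
      have hz' : z (n+1) l = (1 - α * R n) * z n l := by
        rw [hzrec n l h1 (by omega), if_pos h2]; ring
      have h4 : (1 - α*R n)^2 ≤ A1^2 := pow_le_pow_left₀ (hAt n).le (hAtle n).le 2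
      calc (z (n+1) l)^2 = (1-α*R n)^2 * (z n l)^2 := by rw [hz']; ring
      _ ≤ A1^2 * (z n l)^2 := mul_le_mul_of_nonneg_right h4 (sq_nonneg _)
      _ ≤ A1^2 * ((A1^2)^n * (z 0 l)^2) := mul_le_mul_of_nonneg_left ih (sq_nonneg _)
      _ = (A1^2)^(n+1) * (z 0 l)^2 := by ring
  -- the ratio contraction factor
  set Dl : ℝ := lam k - lam (k+1) with hΔdef
  clear_value Dl
  have hΔpos : 0 < Dl := by rw [hΔdef]; linarith [hgap]
  have hΔleb : α * Dl ≤ b := by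
    rw [hΔdef, hbdef]
    exact mul_le_mul_of_nonneg_left (sub_le_self _ (hnonneg (k+1) (by omega) hk1d)) hα.le
  have h1b : (0:ℝ) < 1 + b := by linarith
  set θ₂ : ℝ := 1 - α * Dl / (1 + b) with hθ₂def
  clear_value θ₂
  have hθ₂mul : θ₂ * (1 + b) = 1 + b - α * Dl := by rw [hθ₂def]; field_simp
  have hθ₂pos : 0 < θ₂ := by
    have h2 : α * Dl / (1+b) < 1 := by
      rw [div_lt_one h1b]; linarith [hΔleb]
    rw [hθ₂def]; linarith
  have hθ₂lt1 : θ₂ < 1 := by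
    have h2 : 0 < α * Dl / (1+b) := div_pos (mul_pos hα hΔpos) h1b
    rw [hθ₂def]; linarith
  -- decay of high components relative to the k-th
  have hhigh : ∀ l, k < l → l ≤ d → ∀ t, (z t l)^2 * y 0 ≤ (θ₂^2)^t * (z 0 l)^2 * y t := by
    intro l h1 h2 t
    induction t with
    | zero => simp
    | succ n ih =>
      have hz' : z (n+1) l = (1 + α * (lam l - R n)) * z n l := by
        rw [hzrec n l (by omega) h2, if_neg (by omega)]; ring
      have hlnn := hnonneg l (by omega) h2
      have hρl_nn : 0 ≤ 1 + α * (lam l - R n) := by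
        linarith [hAt n, mul_nonneg hα.le hlnn]
      have hlle : lam l ≤ lam (k+1) := hmono (k+1) l (by omega) (by omega) h2
      have hkey : 1 + α * (lam l - R n) ≤ θ₂ * (1 + α * (lam k - R n)) := by
        rw [← mul_le_mul_iff_of_pos_right h1b]
        have hexp2 : θ₂ * (1 + α*(lam k - R n)) * (1+b)
            = (1 + b - α*Dl) * (1 + α*(lam k - R n)) := by
          rw [← hθ₂mul]; ring
        rw [hexp2]
        have e1 : (1 + b - α*Dl)*(1 + α*(lam k - R n)) - (1 + α*(lam l - R n))*(1+b)
            = (b - α*lam l)*(1+b) - α*Dl*((1 - α*R n) + b) := by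
          rw [hbdef]; ring
        have e2 : α * Dl ≤ b - α * lam l := by
          rw [hΔdef, hbdef]
          have := mul_le_mul_of_nonneg_left
            (by linarith [hlle] : lam k - lam (k+1) ≤ lam k - lam l) hα.le
          linarith [this]
        have e3 : α*Dl*((1 - α*R n) + b) ≤ α*Dl*(1 + b) := by
          apply mul_le_mul_of_nonneg_left _ (mul_nonneg hα.le hΔpos.le)
          have h5 : 0 < α * R n := mul_pos hα (hRpos n)
          linarith
        have e4 : α*Dl*(1+b) ≤ (b - α*lam l)*(1+b) :=
          mul_le_mul_of_nonneg_right e2 h1b.le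
        linarith
      have hsq : (1 + α*(lam l - R n))^2 ≤ θ₂^2 * (1 + α*(lam k - R n))^2 := by
        calc (1 + α*(lam l - R n))^2 ≤ (θ₂ * (1 + α*(lam k - R n)))^2 :=
            pow_le_pow_left₀ hρl_nn hkey 2
        _ = θ₂^2 * (1 + α*(lam k - R n))^2 := by ring
      calc (z (n+1) l)^2 * y 0 = (1+α*(lam l - R n))^2 * ((z n l)^2 * y 0) := by rw [hz']; ring
      _ ≤ (1+α*(lam l - R n))^2 * ((θ₂^2)^n * (z 0 l)^2 * y n) :=
          mul_le_mul_of_nonneg_left ih (sq_nonneg _)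
      _ ≤ (θ₂^2 * (1+α*(lam k - R n))^2) * ((θ₂^2)^n * (z 0 l)^2 * y n) := by
          apply mul_le_mul_of_nonneg_right hsq
          have := (hypos n).le
          positivity
      _ = (θ₂^2)^(n+1) * (z 0 l)^2 * ((1+α*(lam k - R n))^2 * y n) := by ring
      _ = (θ₂^2)^(n+1) * (z 0 l)^2 * y (n+1) := by rw [hyrec n]
    -- uniform geometric bound for δ
  set θ₀ : ℝ := max (A1^2) (θ₂^2) with hθ₀def
  clear_value θ₀
  have hθ₀pos : 0 < θ₀ := by
    rw [hθ₀def]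
    exact lt_of_lt_of_le (by positivity : (0:ℝ) < A1^2) (le_max_left _ _)
  have hθ₀lt1 : θ₀ < 1 := by
    rw [hθ₀def]
    apply max_lt
    · exact pow_lt_one₀ hA1pos.le hA1lt1 two_ne_zero
    · exact pow_lt_one₀ hθ₂pos.le hθ₂lt1 two_ne_zero
  have hA1θ₀ : ∀ t : ℕ, (A1^2)^t ≤ θ₀^t := by
    intro t
    apply pow_le_pow_left₀ (sq_nonneg A1)
    rw [hθ₀def]; exact le_max_left _ _
  have hθ₂θ₀ : ∀ t : ℕ, (θ₂^2)^t ≤ θ₀^t := by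
    intro t
    apply pow_le_pow_left₀ (sq_nonneg θ₂)
    rw [hθ₀def]; exact le_max_right _ _
  set Dc : ℝ := ∑ i ∈ Finset.univ.erase i0, lam ((i:ℕ)+1) * (z 0 ((i:ℕ)+1))^2 * (1 + 3 / y 0)
    with hDcdef
  clear_value Dc
  have hg0 : (0:ℝ) ≤ 1 + 3 / y 0 := by positivity
  have hDnn : 0 ≤ Dc := by
    rw [hDcdef]
    apply Finset.sum_nonneg
    intro i _
    exact mul_nonneg (mul_nonneg (hnonneg _ (by omega) (Nat.succ_le_of_lt i.isLt)) (sq_nonneg _)) hg0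
  have hδdecay : ∀ t, δ t ≤ θ₀^t * Dc := by
    intro t
    rw [hδsum t, hDcdef, Finset.mul_sum]
    apply Finset.sum_le_sum
    intro i hi
    have hid : (i:ℕ)+1 ≤ d := Nat.succ_le_of_lt i.isLt
    have hi1 : 1 ≤ (i:ℕ)+1 := by omega
    have hik : (i:ℕ)+1 ≠ k := by
      intro hc
      exact Finset.ne_of_mem_erase hi (by rw [hi0def]; exact Fin.ext (by omega))
    have hlnn := hnonneg _ hi1 hid
    have hθ₀t : (0:ℝ) ≤ θ₀^t := (pow_pos hθ₀pos t).le
    rcases lt_or_gt_of_ne hik with hlt | hgt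
    · have h5 := hlow _ hi1 hlt t
      have h6 : (z t ((i:ℕ)+1))^2 ≤ θ₀^t * (z 0 ((i:ℕ)+1))^2 :=
        le_trans h5 (mul_le_mul_of_nonneg_right (hA1θ₀ t) (sq_nonneg _))
      calc lam ((i:ℕ)+1) * (z t ((i:ℕ)+1))^2 ≤ lam ((i:ℕ)+1) * (θ₀^t * (z 0 ((i:ℕ)+1))^2) :=
            mul_le_mul_of_nonneg_left h6 hlnn
      _ = θ₀^t * (lam ((i:ℕ)+1) * (z 0 ((i:ℕ)+1))^2 * 1) := by ring
      _ ≤ θ₀^t * (lam ((i:ℕ)+1) * (z 0 ((i:ℕ)+1))^2 * (1 + 3 / y 0)) := by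
            have h7 : (1:ℝ) ≤ 1 + 3 / y 0 := by
              have : (0:ℝ) < 3 / y 0 := by positivity
              linarith
            apply mul_le_mul_of_nonneg_left _ hθ₀t
            exact mul_le_mul_of_nonneg_left h7 (mul_nonneg hlnn (sq_nonneg _))
    · have h5 := hhigh _ hgt hid t
      have h7 : (z t ((i:ℕ)+1))^2 * y 0 ≤ (θ₂^2)^t * (z 0 ((i:ℕ)+1))^2 * 3 := by
        calc (z t ((i:ℕ)+1))^2 * y 0 ≤ (θ₂^2)^t * (z 0 ((i:ℕ)+1))^2 * y t := h5
        _ ≤ (θ₂^2)^t * (z 0 ((i:ℕ)+1))^2 * 3 := by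
            apply mul_le_mul_of_nonneg_left (hy3 t)
            positivity
      have h8 : (z t ((i:ℕ)+1))^2 ≤ (θ₂^2)^t * ((z 0 ((i:ℕ)+1))^2 * (3 / y 0)) := by
        have h8' := (le_div_iff₀ hy0).mpr h7
        calc (z t ((i:ℕ)+1))^2 ≤ (θ₂^2)^t * (z 0 ((i:ℕ)+1))^2 * 3 / y 0 := h8'
        _ = (θ₂^2)^t * ((z 0 ((i:ℕ)+1))^2 * (3 / y 0)) := by ring
      have h9 : (z t ((i:ℕ)+1))^2 ≤ θ₀^t * ((z 0 ((i:ℕ)+1))^2 * (3 / y 0)) :=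
        le_trans h8 (mul_le_mul_of_nonneg_right (hθ₂θ₀ t) (by positivity))
      calc lam ((i:ℕ)+1) * (z t ((i:ℕ)+1))^2
          ≤ lam ((i:ℕ)+1) * (θ₀^t * ((z 0 ((i:ℕ)+1))^2 * (3 / y 0))) :=
            mul_le_mul_of_nonneg_left h9 hlnn
      _ = θ₀^t * (lam ((i:ℕ)+1) * (z 0 ((i:ℕ)+1))^2 * (3 / y 0)) := by ring
      _ ≤ θ₀^t * (lam ((i:ℕ)+1) * (z 0 ((i:ℕ)+1))^2 * (1 + 3 / y 0)) := by
            apply mul_le_mul_of_nonneg_left _ hθ₀t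
            have h10 : (3:ℝ) / y 0 ≤ 1 + 3 / y 0 := by linarith
            exact mul_le_mul_of_nonneg_left h10 (mul_nonneg hlnn (sq_nonneg _))
    -- the error term v
  set v : ℕ → ℝ := fun t => lam k * (1 - y t) with hvdef
  clear_value v
  have hvrec : ∀ t, v (t+1) = ((1 - α*R t)^2 - b*(α*R t)) * v t
      + b * δ t * (2 + α * (lam k - R t)) := by
    intro t
    simp only [hvdef, hδdef, hbdef]
    rw [hyrec t]
    ring
  -- bounds on the contraction coefficient
  have hcU : ∀ t, (1 - α*R t)^2 - b*(α*R t) ≤ A1^2 := by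
    intro t
    have p1 : (1 - α*R t)^2 ≤ A1^2 := pow_le_pow_left₀ (hAt t).le (hAtle t).le 2
    have p2 : 0 ≤ b * (α * R t) := mul_nonneg hb0.le (mul_pos hα (hRpos t)).le
    linarith
  have hcL : ∀ t, -b ≤ (1 - α*R t)^2 - b*(α*R t) := by
    intro t
    have p1 : b * (α * R t) ≤ b := mul_le_of_le_one_right hb0.le (hR1 t).le
    linarith [sq_nonneg (1 - α*R t)]
  set E : ℝ := b * (2 + b) with hEdef
  clear_value E
  have hEpos : 0 < E := by rw [hEdef]; exact mul_pos hb0 (by linarith)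
  have hforce1 : ∀ t, b * δ t * (2 + α*(lam k - R t)) ≤ E * δ t := by
    intro t
    have h2 : 2 + α * (lam k - R t) ≤ 2 + b := by
      rw [hbdef]; linarith [mul_pos hα (hRpos t)]
    calc b * δ t * (2 + α*(lam k - R t)) ≤ b * δ t * (2+b) :=
        mul_le_mul_of_nonneg_left h2 (mul_nonneg hb0.le (hδnn t))
    _ = E * δ t := by rw [hEdef]; ring
  have hforce0 : ∀ t, 0 ≤ b * δ t * (2 + α*(lam k - R t)) := by
    intro t
    have h1 : 0 < 2 + α * (lam k - R t) := by linarith [hρpos t]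
    exact mul_nonneg (mul_nonneg hb0.le (hδnn t)) h1.le
  -- one-step contraction for |v|
  have hstep : ∃ θ₁, 0 < θ₁ ∧ θ₁ < 1 ∧ ∀ t, |v (t+1)| ≤ θ₁ * |v t| + E * δ t := by
    rcases lt_or_eq_of_le hble1 with hblt | hbeq
    · refine ⟨max (A1^2) b, lt_of_lt_of_le hb0 (le_max_right _ _),
        max_lt (pow_lt_one₀ hA1pos.le hA1lt1 two_ne_zero) hblt, ?_⟩
      intro t
      rw [hvrec t]
      have hc : |(1 - α*R t)^2 - b*(α*R t)| ≤ max (A1^2) b := by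
        rw [abs_le]
        constructor
        · have h1 := hcL t
          have h2 : b ≤ max (A1^2) b := le_max_right _ _
          linarith
        · exact le_trans (hcU t) (le_max_left _ _)
      calc |((1 - α*R t)^2 - b*(α*R t)) * v t + b * δ t * (2 + α*(lam k - R t))|
          ≤ |((1 - α*R t)^2 - b*(α*R t)) * v t| + |b * δ t * (2 + α*(lam k - R t))| :=
            abs_add_le _ _
      _ = |(1 - α*R t)^2 - b*(α*R t)| * |v t| + b * δ t * (2 + α*(lam k - R t)) := by
            rw [abs_mul, abs_of_nonneg (hforce0 t)]
      _ ≤ max (A1^2) b * |v t| + E * δ t :=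
            add_le_add (mul_le_mul_of_nonneg_right hc (abs_nonneg _)) (hforce1 t)
    · -- b = 1 : here v t ≥ 0 for all t
      have hvnn : ∀ t, 0 ≤ v t := by
        intro t
        have h1 := hR1 t
        have h2 : R t = lam k * y t + δ t := by simp only [hδdef]; ring
        rw [h2] at h1
        have h3 := hδnn t
        have h4 : α * lam k = 1 := by rw [← hbdef, ← hbeq]
        have key : α * (lam k * y t + δ t) = y t + α * δ t := by
          rw [mul_add, ← mul_assoc, h4, one_mul]
        rw [key] at h1
        have h5 : y t < 1 := by linarith [mul_nonneg hα.le h3]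
        simp only [hvdef]
        exact mul_nonneg hlamk.le (by linarith)
      refine ⟨A1^2, by positivity, pow_lt_one₀ hA1pos.le hA1lt1 two_ne_zero, ?_⟩
      intro t
      rw [abs_of_nonneg (hvnn (t+1)), abs_of_nonneg (hvnn t), hvrec t]
      have h6 : ((1 - α*R t)^2 - b*(α*R t)) * v t ≤ A1^2 * v t :=
        mul_le_mul_of_nonneg_right (hcU t) (hvnn t)
      linarith [hforce1 t]
  obtain ⟨θ₁, hθ₁pos, hθ₁lt1, hvstep⟩ := hstep
  -- geometric bound for |v|
  set θ : ℝ := (max θ₁ θ₀ + 1) / 2 with hθdef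
  clear_value θ
  have hmax1 : max θ₁ θ₀ < 1 := max_lt hθ₁lt1 hθ₀lt1
  have hθlt1 : θ < 1 := by rw [hθdef]; linarith
  have hθpos : 0 < θ := by
    have h1 : 0 < max θ₁ θ₀ := lt_of_lt_of_le hθ₁pos (le_max_left _ _)
    rw [hθdef]; linarith
  have hθ₁θ : θ₁ < θ := by
    have h1 : θ₁ ≤ max θ₁ θ₀ := le_max_left _ _
    rw [hθdef]; linarith
  have hθ₀θ : θ₀ ≤ θ := by
    have h1 : θ₀ ≤ max θ₁ θ₀ := le_max_right _ _
    rw [hθdef]; linarith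
  set M : ℝ := max (|v 0|) (E * Dc / (θ - θ₁)) with hMdef
  clear_value M
  have hM0 : 0 ≤ M := le_trans (abs_nonneg _) (by rw [hMdef]; exact le_max_left _ _)
  have hMED : E * Dc ≤ M * (θ - θ₁) := by
    have h1 : E * Dc / (θ - θ₁) ≤ M := by rw [hMdef]; exact le_max_right _ _
    rw [div_le_iff₀ (by linarith : (0:ℝ) < θ - θ₁)] at h1
    linarith
  have hvbound : ∀ t, |v t| ≤ M * θ^t := by
    intro t
    induction t with
    | zero =>
      simpa using le_trans (by rw [hMdef]; exact le_max_left _ _) (le_refl M)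
    | succ n ih =>
      have h2 : E * δ n ≤ E * (θ₀^n * Dc) :=
        mul_le_mul_of_nonneg_left (hδdecay n) hEpos.le
      have h3 : θ₀^n ≤ θ^n := pow_le_pow_left₀ hθ₀pos.le hθ₀θ n
      have h4 : E * (θ₀^n * Dc) ≤ E * Dc * θ^n := by
        calc E * (θ₀^n * Dc) = E * Dc * θ₀^n := by ring
        _ ≤ E * Dc * θ^n := mul_le_mul_of_nonneg_left h3 (mul_nonneg hEpos.le hDnn)
      calc |v (n+1)| ≤ θ₁ * |v n| + E * δ n := hvstep n
      _ ≤ θ₁ * (M * θ^n) + E * Dc * θ^n :=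
          add_le_add (mul_le_mul_of_nonneg_left ih hθ₁pos.le) (le_trans h2 h4)
      _ ≤ θ₁ * (M * θ^n) + M * (θ - θ₁) * θ^n :=
          add_le_add le_rfl (mul_le_mul_of_nonneg_right hMED (pow_nonneg hθpos.le n))
      _ = M * θ^(n+1) := by ring
  -- conclusion
  refine ⟨M + Dc + 1, by linarith, θ, ⟨hθpos, hθlt1⟩, ?_⟩
  intro t
  rw [hRt t]
  have h1 : lam k - R t = v t - δ t := by simp only [hvdef, hδdef]; ring
  rw [h1]
  have h2 : |v t - δ t| ≤ |v t| + δ t := by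
    calc |v t - δ t| ≤ |v t| + |δ t| := abs_sub _ _
    _ = |v t| + δ t := by rw [abs_of_nonneg (hδnn t)]
  have h3 := hδdecay t
  have h4 : θ₀^t * Dc ≤ θ^t * Dc :=
    mul_le_mul_of_nonneg_right (pow_le_pow_left₀ hθ₀pos.le hθ₀θ t) hDnn
  have h5 := hvbound t
  have h6 : 0 < θ^t := pow_pos hθpos t
  linarith [h2, h3, h4, h5, h6]
end

section
/- Suppose (x_k^{(t)})ᵀ C x_k^{(t)} < λ_m and (x_k^{(t)})ᵀ C x_k^{(t)} < 1/α. Then the projected Rayleigh quotient is nondecreasing after one modified GHA step: (x̃_k^{(t+1)})ᵀ C x̃_k^{(t+1)} ≥ (1 + α(λ_m − (x_k^{(t)})ᵀ C x_k^{(t)}))² (x̃_k^{(t)})ᵀ C x̃_k^{(t)} ≥ (x̃_k^{(t)})ᵀ C x̃_k^{(t)}. -/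
open Matrix Finset

/-- Coerce back. -/
def ofE {d : ℕ} (v : EuclideanSpace ℝ (Fin d)) : Fin d → ℝ := WithLp.ofLp v

lemma myDotSum {d : ℕ} {ι : Type*} (S : Finset ι) (u : Fin d → ℝ) (f : ι → Fin d → ℝ) :
    u ⬝ᵥ (∑ l ∈ S, f l) = ∑ l ∈ S, u ⬝ᵥ f l := by
  simp only [dotProduct, Finset.sum_apply, Finset.mul_sum]
  exact Finset.sum_comm

lemma mySumDot {d : ℕ} {ι : Type*} (S : Finset ι) (u : Fin d → ℝ) (f : ι → Fin d → ℝ) :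
    (∑ l ∈ S, f l) ⬝ᵥ u = ∑ l ∈ S, f l ⬝ᵥ u := by
  simp only [dotProduct, Finset.sum_apply, Finset.sum_mul]
  exact Finset.sum_comm

lemma myMulVecSum {d : ℕ} {ι : Type*} (S : Finset ι) (C : Matrix (Fin d) (Fin d) ℝ)
    (f : ι → Fin d → ℝ) : C.mulVec (∑ l ∈ S, f l) = ∑ l ∈ S, C.mulVec (f l) := by
  rw [← Matrix.mulVecLin_apply, map_sum]; rfl

lemma myRayleigh {d : ℕ} (C : Matrix (Fin d) (Fin d) ℝ) (lam : ℕ → ℝ)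
    (q : ℕ → Fin d → ℝ) (k : ℕ)
    (horth : ∀ l ∈ Finset.Icc k d, ∀ l' ∈ Finset.Icc k d, q l ⬝ᵥ q l' = if l = l' then 1 else 0)
    (heig : ∀ l ∈ Finset.Icc k d, C.mulVec (q l) = lam l • q l)
    (a : ℕ → ℝ) :
    (∑ l ∈ Finset.Icc k d, a l • q l) ⬝ᵥ C.mulVec (∑ l ∈ Finset.Icc k d, a l • q l)
      = ∑ l ∈ Finset.Icc k d, lam l * (a l)^2 := by
  rw [show C.mulVec (∑ l ∈ Finset.Icc k d, a l • q l)
      = ∑ l ∈ Finset.Icc k d, (a l * lam l) • q l by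
    rw [myMulVecSum]
    refine Finset.sum_congr rfl fun l hl => ?_
    rw [Matrix.mulVec_smul, heig l hl, smul_smul]]
  rw [mySumDot]
  refine Finset.sum_congr rfl fun l hl => ?_
  rw [myDotSum, Finset.sum_eq_single l]
  · rw [smul_dotProduct, dotProduct_smul, horth l hl l hl, if_pos rfl]
    simp; ring
  · intro b hb hbl
    rw [smul_dotProduct, dotProduct_smul, horth l hl b hb, if_neg (Ne.symm hbl)]
    simp
  · intro h; exact absurd hl h

/-- monotonicity of the projected Rayleigh quotient of the modified
GHA, where `x̃_k^{(t)} = Σ_{l=k}^{d} (q_lᵀ x_k^{(t)}) q_l` is the projection of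
`x_k^{(t)}` onto `span{q_k, …, q_d}`: if `xᵀCx < λ_m` and `xᵀCx < 1/α`, then
`(x̃^{(t+1)})ᵀ C x̃^{(t+1)} ≥ (1 + α(λ_m − xᵀCx))² (x̃^{(t)})ᵀ C x̃^{(t)} ≥ (x̃^{(t)})ᵀ C x̃^{(t)}`. -/
theorem modified_GHA_projected_rayleigh_monotone
    (d K : ℕ) (hK1 : 1 ≤ K) (hKd : K < d)
    (C : Matrix (Fin d) (Fin d) ℝ) (hC : C.PosSemidef)
    (lam : ℕ → ℝ) (q : ℕ → EuclideanSpace ℝ (Fin d))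
    (horth : ∀ l l', 1 ≤ l → l ≤ d → 1 ≤ l' → l' ≤ d →
      (q l) ⬝ᵥ (q l' : Fin d → ℝ) = if l = l' then 1 else 0)
    (heig : ∀ l, 1 ≤ l → l ≤ d → C.mulVec (q l) = lam l • (q l : Fin d → ℝ))
    (hstrict : ∀ l l', 1 ≤ l → l < l' → l' ≤ d → l ≤ K → lam l' < lam l)
    (hmono : ∀ l l', 1 ≤ l → l ≤ l' → l' ≤ d → lam l' ≤ lam l)
    (hnonneg : ∀ l, 1 ≤ l → l ≤ d → 0 ≤ lam l)
    (hKpos : 0 < lam K)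
    (k : ℕ) (hk1 : 1 ≤ k) (hkK : k ≤ K)
    (α : ℝ) (hα : 0 < α)
    (x : ℕ → EuclideanSpace ℝ (Fin d))
    (hiter : ∀ t, x (t + 1) = x t + α •
      (toE (C.mulVec (x t)) - ((x t) ⬝ᵥ C.mulVec (x t)) • x t
        - ∑ p ∈ Finset.Icc 1 (k - 1), ((q p) ⬝ᵥ C.mulVec (x t)) • q p))
    -- `λ_m` : the smallest nonzero eigenvalue of `C`
    (m : ℕ) (hm1 : 1 ≤ m) (hmd : m ≤ d) (hmne : lam m ≠ 0)
    (hmsmall : ∀ l, 1 ≤ l → l ≤ d → lam l ≠ 0 → lam m ≤ lam l)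
    -- the projection `x̃_k^{(t)}` of `x_k^{(t)}` onto `span{q_k, …, q_d}`
    (xt : ℕ → EuclideanSpace ℝ (Fin d))
    (hxt : ∀ t, xt t = ∑ l ∈ Finset.Icc k d, ((q l) ⬝ᵥ (x t : Fin d → ℝ)) • q l)
    (t : ℕ)
    (hray_m : (x t) ⬝ᵥ C.mulVec (x t) < lam m)
    (hray_ub : (x t) ⬝ᵥ C.mulVec (x t) < 1 / α) :
    (1 + α * (lam m - (x t) ⬝ᵥ C.mulVec (x t))) ^ 2 * ((xt t) ⬝ᵥ C.mulVec (xt t)) ≤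
        (xt (t + 1)) ⬝ᵥ C.mulVec (xt (t + 1)) ∧
      (xt t) ⬝ᵥ C.mulVec (xt t) ≤
        (1 + α * (lam m - (x t) ⬝ᵥ C.mulVec (x t))) ^ 2 * ((xt t) ⬝ᵥ C.mulVec (xt t)) := by
  set ρ : ℝ := (x t) ⬝ᵥ C.mulVec (x t) with hρ
  set Q : ℕ → Fin d → ℝ := fun l => ofE (q l) with hQ
  set z : ℕ → ℝ := fun l => Q l ⬝ᵥ ofE (x t) with hz
  set c : ℕ → ℝ := fun l => 1 + α * (lam l - ρ) with hc
  -- symmetry of C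
  have hT : Cᵀ = C := by
    have := hC.1.eq
    rwa [Matrix.conjTranspose_eq_transpose_of_trivial] at this
  have hsym : ∀ v w : Fin d → ℝ, v ⬝ᵥ C.mulVec w = (C.mulVec v) ⬝ᵥ w := by
    intro v w
    rw [Matrix.dotProduct_mulVec, ← Matrix.mulVec_transpose, hT]
  -- orthonormality and eigenvalue facts for the Pi-typed Q
  have horthQ : ∀ l ∈ Finset.Icc k d, ∀ l' ∈ Finset.Icc k d,
      Q l ⬝ᵥ Q l' = if l = l' then 1 else 0 := by
    intro l hl l' hl'
    rw [Finset.mem_Icc] at hl hl'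
    exact horth l l' (le_trans hk1 hl.1) hl.2 (le_trans hk1 hl'.1) hl'.2
  have heigQ : ∀ l ∈ Finset.Icc k d, C.mulVec (Q l) = lam l • Q l := by
    intro l hl
    rw [Finset.mem_Icc] at hl
    exact heig l (le_trans hk1 hl.1) hl.2
  -- eigen-dot fact: Q l ⬝ᵥ C.mulVec v = lam l * (Q l ⬝ᵥ v)
  have heigdot : ∀ l, 1 ≤ l → l ≤ d → ∀ v : Fin d → ℝ,
      Q l ⬝ᵥ C.mulVec v = lam l * (Q l ⬝ᵥ v) := by
    intro l h1 h2 v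
    rw [hsym, show C.mulVec (Q l) = lam l • Q l from heig l h1 h2]
    exact smul_dotProduct _ _ _
  -- the step formula for coefficients along q l, l ≥ k
  have hstep : ofE (x (t + 1)) = ofE (x t) + α • (C.mulVec (ofE (x t)) - ρ • ofE (x t)
      - ∑ p ∈ Finset.Icc 1 (k - 1), ((q p) ⬝ᵥ C.mulVec (x t)) • Q p) := by
    rw [hiter t]; simp only [ofE, toE, WithLp.ofLp_add, WithLp.ofLp_sub, WithLp.ofLp_smul, WithLp.ofLp_sum, WithLp.ofLp_toLp]; rfl
  have hcoef : ∀ l, l ∈ Finset.Icc k d →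
      Q l ⬝ᵥ ofE (x (t + 1)) = c l * z l := by
    intro l hl
    rw [Finset.mem_Icc] at hl
    have h1l : 1 ≤ l := le_trans hk1 hl.1
    rw [hstep, dotProduct_add, dotProduct_smul, dotProduct_sub, dotProduct_sub,
      dotProduct_smul, myDotSum, heigdot l h1l hl.2]
    have hsum0 : ∑ p ∈ Finset.Icc 1 (k - 1), Q l ⬝ᵥ (((q p) ⬝ᵥ C.mulVec (x t)) • Q p) = 0 := by
      refine Finset.sum_eq_zero fun p hp => ?_
      rw [Finset.mem_Icc] at hp
      have hpk : p < k := lt_of_le_of_lt hp.2 (Nat.sub_lt hk1 one_pos)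
      rw [dotProduct_smul]
      have : Q l ⬝ᵥ Q p = 0 := by
        rw [show Q l ⬝ᵥ Q p = if l = p then 1 else 0 from
          horth l p h1l hl.2 hp.1 (le_trans (le_of_lt hpk) (le_trans hkK (le_of_lt hKd)))]
        rw [if_neg (by omega)]
      rw [this]; simp
    rw [hsum0]
    simp only [smul_eq_mul, hc, hz]
    ring
  -- Rayleigh quotient expansions
  have hzt : ofE (xt t) = ∑ l ∈ Finset.Icc k d, z l • Q l := by
    rw [hxt t]; simp only [ofE, toE, WithLp.ofLp_add, WithLp.ofLp_sub, WithLp.ofLp_smul, WithLp.ofLp_sum, WithLp.ofLp_toLp]; rfl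
  have hzt1 : ofE (xt (t + 1)) = ∑ l ∈ Finset.Icc k d, (c l * z l) • Q l := by
    rw [hxt (t + 1)]
    have : ((∑ l ∈ Finset.Icc k d, ((q l) ⬝ᵥ (x (t+1) : Fin d → ℝ)) • q l
        : EuclideanSpace ℝ (Fin d)) : Fin d → ℝ)
        = ∑ l ∈ Finset.Icc k d, ((q l) ⬝ᵥ (x (t+1) : Fin d → ℝ)) • Q l := by simp only [ofE, toE, WithLp.ofLp_add, WithLp.ofLp_sub, WithLp.ofLp_smul, WithLp.ofLp_sum, WithLp.ofLp_toLp]; rfl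
    rw [show ofE (∑ l ∈ Finset.Icc k d, ((q l) ⬝ᵥ (x (t+1) : Fin d → ℝ)) • q l)
        = ∑ l ∈ Finset.Icc k d, ((q l) ⬝ᵥ (x (t+1) : Fin d → ℝ)) • Q l from by simp only [ofE, toE, WithLp.ofLp_add, WithLp.ofLp_sub, WithLp.ofLp_smul, WithLp.ofLp_sum, WithLp.ofLp_toLp]; rfl]
    exact Finset.sum_congr rfl fun l hl => by rw [show (q l) ⬝ᵥ (x (t+1) : Fin d → ℝ)
      = Q l ⬝ᵥ ofE (x (t+1)) from rfl, hcoef l hl]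
  have hR0 : (xt t) ⬝ᵥ C.mulVec (xt t) = ∑ l ∈ Finset.Icc k d, lam l * (z l)^2 := by
    rw [show (xt t) ⬝ᵥ C.mulVec (xt t) = ofE (xt t) ⬝ᵥ C.mulVec (ofE (xt t)) from rfl, hzt]
    exact myRayleigh C lam Q k horthQ heigQ z
  have hR1 : (xt (t+1)) ⬝ᵥ C.mulVec (xt (t+1))
      = ∑ l ∈ Finset.Icc k d, lam l * (c l * z l)^2 := by
    rw [show (xt (t+1)) ⬝ᵥ C.mulVec (xt (t+1))
      = ofE (xt (t+1)) ⬝ᵥ C.mulVec (ofE (xt (t+1))) from rfl, hzt1]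
    exact myRayleigh C lam Q k horthQ heigQ _
  -- scalar facts
  have hcm1 : 1 ≤ c m := by
    simp only [hc]
    nlinarith [hray_m]
  have hterm : ∀ l ∈ Finset.Icc k d, 0 ≤ lam l * (z l)^2 := by
    intro l hl
    rw [Finset.mem_Icc] at hl
    exact mul_nonneg (hnonneg l (le_trans hk1 hl.1) hl.2) (sq_nonneg _)
  constructor
  · rw [hR0, hR1, Finset.mul_sum]
    refine Finset.sum_le_sum fun l hl => ?_
    have hmem := hl
    rw [Finset.mem_Icc] at hl
    have h1l : 1 ≤ l := le_trans hk1 hl.1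
    rcases eq_or_ne (lam l) 0 with h0 | h0
    · simp [h0]
    · have hml : lam m ≤ lam l := hmsmall l h1l hl.2 h0
      have hcl : c m ≤ c l := by simp only [hc]; nlinarith
      have hcm0 : 0 < c m := lt_of_lt_of_le one_pos hcm1
      have hsq : (c m)^2 ≤ (c l)^2 := by nlinarith
      have hlz : 0 ≤ lam l * (z l)^2 := hterm l hmem
      calc c m ^ 2 * (lam l * z l ^ 2) ≤ c l ^ 2 * (lam l * z l ^ 2) :=
            mul_le_mul_of_nonneg_right hsq hlz
        _ = lam l * (c l * z l) ^ 2 := by ring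
  · rw [hR0]
    have hS : ∑ l ∈ Finset.Icc k d, lam l * (z l)^2
        ≤ (c m)^2 * ∑ l ∈ Finset.Icc k d, lam l * (z l)^2 := by
      have h0 : 0 ≤ ∑ l ∈ Finset.Icc k d, lam l * (z l)^2 := Finset.sum_nonneg hterm
      have h1 : 1 ≤ (c m)^2 := by nlinarith
      exact le_mul_of_one_le_left h0 h1
    exact hS
end

section
/- Fix a node i and k ∈ {1,...,K}, and let λ_{i,1} denote the largest eigenvalue of C_i. If the local vectors satisfy ‖x_{i,p}‖² ≤ 3 for all p = 1, ..., k, then the local Sanger direction satisfies ‖H_i(x_{i,k})‖² ≤ 3 λ_{i,1}² (3k−2)(3k+1). -/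
open Matrix Finset
open scoped RealInnerProductSpace

/-- The local Sanger direction for the `k`-th vector, computed from the family
`y 1, …, y k` of local vectors:
`H(y k) = C y_k − (y_kᵀ C y_k) y_k − Σ_{p=1}^{k−1} (y_pᵀ C y_k) y_p`. -/
noncomputable def sangerDir {d : ℕ} (C : Matrix (Fin d) (Fin d) ℝ)
    (y : ℕ → EuclideanSpace ℝ (Fin d)) (k : ℕ) : EuclideanSpace ℝ (Fin d) :=
  toE (C.mulVec (y k)) - ((y k) ⬝ᵥ C.mulVec (y k)) • y k
    - ∑ p ∈ Finset.Icc 1 (k - 1), ((y p) ⬝ᵥ C.mulVec (y k)) • y p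

/-- Every eigenvalue of a positive semidefinite real matrix is nonnegative. -/
theorem eig_nonneg {d : ℕ} (C : Matrix (Fin d) (Fin d) ℝ) (hC : C.PosSemidef) (μ : ℝ)
    (h : Module.End.HasEigenvalue (Matrix.toEuclideanLin C) μ) : 0 ≤ μ := by
  obtain ⟨w, hw⟩ := h.exists_hasEigenvector
  have h1 : ⟪w, Matrix.toEuclideanLin C w⟫ = μ * ‖w‖ ^ 2 := by
    rw [hw.apply_eq_smul, real_inner_smul_right, real_inner_self_eq_norm_sq]
  have h2 : (0:ℝ) ≤ ⟪w, Matrix.toEuclideanLin C w⟫ := by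
    have := hC.dotProduct_mulVec_nonneg w
    simpa [PiLp.inner_apply, dotProduct, mul_comm] using this
  have h3 : 0 < ‖w‖ ^ 2 := pow_pos (norm_pos_iff.mpr hw.2) 2
  nlinarith [h1, h2, h3]

/-- A PSD matrix whose eigenvalues are bounded by `lam1` has operator norm at most `lam1`. -/
theorem opbound {d : ℕ} (C : Matrix (Fin d) (Fin d) ℝ) (hC : C.PosSemidef) (lam1 : ℝ)
    (hlam : 0 ≤ lam1)
    (hMax : ∀ μ, Module.End.HasEigenvalue (Matrix.toEuclideanLin C) μ → μ ≤ lam1)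
    (v : EuclideanSpace ℝ (Fin d)) :
    ‖Matrix.toEuclideanLin C v‖ ≤ lam1 * ‖v‖ := by
  set T := Matrix.toEuclideanLin C with hTdef
  have hnn : ∀ μ, Module.End.HasEigenvalue T μ → 0 ≤ μ := eig_nonneg C hC
  have hT : T.IsSymmetric := Matrix.isHermitian_iff_isSymmetric.1 hC.1
  have hn : Module.finrank ℝ (EuclideanSpace ℝ (Fin d)) = d := finrank_euclideanSpace_fin
  set b := hT.eigenvectorBasis hn with hb
  set μ := hT.eigenvalues hn with hμ
  have hbound : ∀ i, 0 ≤ μ i ∧ μ i ≤ lam1 := fun i =>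
    ⟨hnn _ (hT.hasEigenvalue_eigenvalues hn i), hMax _ (hT.hasEigenvalue_eigenvalues hn i)⟩
  have h1 : ∀ u : EuclideanSpace ℝ (Fin d), ‖u‖ ^ 2 = ∑ i, (b.repr u i) ^ 2 := by
    intro u
    rw [← b.repr.norm_map u, EuclideanSpace.norm_eq]
    rw [Real.sq_sqrt (by positivity)]
    simp [sq_abs]
  have hsq : ‖T v‖ ^ 2 ≤ (lam1 * ‖v‖) ^ 2 := by
    rw [h1 (T v), mul_pow, h1 v]
    have h2 : ∀ i, b.repr (T v) i = μ i * b.repr v i := fun i =>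
      hT.eigenvectorBasis_apply_self_apply hn v i
    calc ∑ i, (b.repr (T v) i) ^ 2 = ∑ i, (μ i)^2 * (b.repr v i) ^ 2 := by
          simp [h2, mul_pow]
      _ ≤ ∑ i, lam1 ^ 2 * (b.repr v i) ^ 2 := by
          apply Finset.sum_le_sum
          intro i _
          have := hbound i
          nlinarith [sq_nonneg (b.repr v i), this.1, this.2,
            mul_self_le_mul_self this.1 this.2]
      _ = lam1 ^ 2 * ∑ i, (b.repr v i) ^ 2 := by rw [Finset.mul_sum]
  calc ‖T v‖ = Real.sqrt (‖T v‖ ^ 2) := (Real.sqrt_sq (norm_nonneg _)).symm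
    _ ≤ Real.sqrt ((lam1 * ‖v‖) ^ 2) := Real.sqrt_le_sqrt hsq
    _ = lam1 * ‖v‖ := Real.sqrt_sq (by positivity)

/-- Lemma 7 of the paper: if the local vectors satisfy
`‖x_{i,p}‖² ≤ 3` for `p = 1, …, k`, then the local Sanger direction satisfies
`‖H_i(x_{i,k})‖² ≤ 3 λ_{i,1}² (3k−2)(3k+1)`, where `λ_{i,1}` is the largest
eigenvalue of the positive semidefinite local covariance matrix `C_i`. -/
theorem sanger_direction_norm_bound
    (d K : ℕ) (hK1 : 1 ≤ K)
    (Ci : Matrix (Fin d) (Fin d) ℝ) (hCi : Ci.PosSemidef)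
    -- `λ_{i,1}` : the largest eigenvalue of `C_i`
    (lam1 : ℝ)
    (hEig : Module.End.HasEigenvalue (Matrix.toEuclideanLin Ci) lam1)
    (hMax : ∀ μ, Module.End.HasEigenvalue (Matrix.toEuclideanLin Ci) μ → μ ≤ lam1)
    (k : ℕ) (hk1 : 1 ≤ k) (hkK : k ≤ K)
    (x : ℕ → EuclideanSpace ℝ (Fin d))
    (hxb : ∀ p, 1 ≤ p → p ≤ k → ‖x p‖ ^ 2 ≤ 3) :
    ‖sangerDir Ci x k‖ ^ 2 ≤ 3 * lam1 ^ 2 * (3 * (k : ℝ) - 2) * (3 * (k : ℝ) + 1) := by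
  have hlam : 0 ≤ lam1 := eig_nonneg Ci hCi lam1 hEig
  set c : ℕ → ℝ := fun p => (x p) ⬝ᵥ Ci.mulVec (x k) with hc
  set v : EuclideanSpace ℝ (Fin d) := toE (Ci.mulVec (x k)) with hv
  set S : EuclideanSpace ℝ (Fin d) := ∑ p ∈ Finset.Icc 1 k, c p • x p with hS
  -- rewrite sangerDir as v - S
  have hH : sangerDir Ci x k = v - S := by
    obtain ⟨m, rfl⟩ : ∃ m, k = m + 1 := ⟨k - 1, by omega⟩
    rw [sangerDir, hS, Finset.sum_Icc_succ_top (by omega : 1 ≤ m + 1)]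
    simp only [Nat.add_sub_cancel]
    abel
  -- v = T (x k)
  have hvT : v = Matrix.toEuclideanLin Ci (x k) := rfl
  have hvb : ‖v‖ ^ 2 ≤ 3 * lam1 ^ 2 := by
    have h1 : ‖v‖ ≤ lam1 * ‖x k‖ := hvT ▸ opbound Ci hCi lam1 hlam hMax (x k)
    have h2 : ‖x k‖ ^ 2 ≤ 3 := hxb k hk1 le_rfl
    nlinarith [norm_nonneg v, norm_nonneg (x k), sq_nonneg lam1]
  -- inner products
  have hinner : ∀ p, ⟪x p, v⟫ = c p := by
    intro p
    simp [hv, hc, PiLp.inner_apply, toE, dotProduct, RCLike.inner_apply, mul_comm]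
  have hcross : ⟪v, S⟫ = ∑ p ∈ Finset.Icc 1 k, c p ^ 2 := by
    rw [hS, inner_sum]
    apply Finset.sum_congr rfl
    intro p _
    rw [real_inner_smul_right, real_inner_comm, hinner p, sq]
  -- bound on each c p
  have hcb : ∀ p ∈ Finset.Icc 1 k, c p ^ 2 ≤ 9 * lam1 ^ 2 := by
    intro p hp
    rw [Finset.mem_Icc] at hp
    have h1 : |⟪x p, v⟫| ≤ ‖x p‖ * ‖v‖ := abs_real_inner_le_norm _ _
    have h2 : ‖x p‖ ^ 2 ≤ 3 := hxb p hp.1 hp.2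
    have h3 : c p ^ 2 ≤ ‖x p‖ ^ 2 * ‖v‖ ^ 2 := by
      rw [← hinner p]
      calc ⟪x p, v⟫ ^ 2 = |⟪x p, v⟫| ^ 2 := (sq_abs _).symm
        _ ≤ (‖x p‖ * ‖v‖) ^ 2 := by
            apply pow_le_pow_left₀ (abs_nonneg _) h1
        _ = ‖x p‖ ^ 2 * ‖v‖ ^ 2 := by ring
    nlinarith [norm_nonneg (x p), norm_nonneg v, sq_nonneg (‖v‖), hvb]
  set Q : ℝ := ∑ p ∈ Finset.Icc 1 k, c p ^ 2 with hQ
  have hQnn : 0 ≤ Q := Finset.sum_nonneg fun p _ => sq_nonneg _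
  have hQb : Q ≤ (k : ℝ) * (9 * lam1 ^ 2) := by
    rw [hQ]
    calc ∑ p ∈ Finset.Icc 1 k, c p ^ 2 ≤ ∑ p ∈ Finset.Icc 1 k, 9 * lam1 ^ 2 :=
          Finset.sum_le_sum hcb
      _ = (k : ℝ) * (9 * lam1 ^ 2) := by
          rw [Finset.sum_const, Nat.card_Icc]
          simp
  -- bound on ‖S‖²
  have hSb : ‖S‖ ^ 2 ≤ 3 * (k : ℝ) * Q := by
    have h1 : ‖S‖ ≤ ∑ p ∈ Finset.Icc 1 k, |c p| * ‖x p‖ := by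
      refine (norm_sum_le _ _).trans ?_
      apply Finset.sum_le_sum
      intro p _
      rw [norm_smul, Real.norm_eq_abs]
    have h2 : (∑ p ∈ Finset.Icc 1 k, |c p| * ‖x p‖) ^ 2 ≤
        (∑ p ∈ Finset.Icc 1 k, |c p| ^ 2) * (∑ p ∈ Finset.Icc 1 k, ‖x p‖ ^ 2) :=
      Finset.sum_mul_sq_le_sq_mul_sq _ _ _
    have h3 : (∑ p ∈ Finset.Icc 1 k, |c p| ^ 2) = Q := by
      simp [hQ, sq_abs]
    have h4 : (∑ p ∈ Finset.Icc 1 k, ‖x p‖ ^ 2) ≤ 3 * (k : ℝ) := by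
      calc ∑ p ∈ Finset.Icc 1 k, ‖x p‖ ^ 2 ≤ ∑ p ∈ Finset.Icc 1 k, (3:ℝ) := by
            apply Finset.sum_le_sum
            intro p hp
            rw [Finset.mem_Icc] at hp
            exact hxb p hp.1 hp.2
        _ = 3 * (k : ℝ) := by rw [Finset.sum_const, Nat.card_Icc]; simp [mul_comm]
    have h5 : ‖S‖ ^ 2 ≤ (∑ p ∈ Finset.Icc 1 k, |c p| * ‖x p‖) ^ 2 := by
      apply pow_le_pow_left₀ (norm_nonneg _) h1
    calc ‖S‖ ^ 2 ≤ (∑ p ∈ Finset.Icc 1 k, |c p| ^ 2) * (∑ p ∈ Finset.Icc 1 k, ‖x p‖ ^ 2) :=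
          h5.trans h2
      _ = Q * (∑ p ∈ Finset.Icc 1 k, ‖x p‖ ^ 2) := by rw [h3]
      _ ≤ Q * (3 * (k : ℝ)) := by
          apply mul_le_mul_of_nonneg_left h4 hQnn
      _ = 3 * (k : ℝ) * Q := by ring
  have hexp : ‖sangerDir Ci x k‖ ^ 2 = ‖v‖ ^ 2 - 2 * Q + ‖S‖ ^ 2 := by
    rw [hH, norm_sub_sq_real, hcross]
  have hk1' : (1:ℝ) ≤ (k:ℝ) := by exact_mod_cast hk1
  rw [hexp]
  nlinarith [hvb, hSb, hQb, hQnn, sq_nonneg lam1, hk1']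
end

section
/- Fix a node i and k ∈ {1,...,K}. Let u, v ∈ ℝ^d with ‖u‖ ≤ √3 and ‖v‖ ≤ √3, and suppose the local vectors satisfy ‖x_{i,p}‖² ≤ 3 for p = 1, ..., k−1. Writing H_i(u) and H_i(v) for the local Sanger directions whose k-th argument is u respectively v (with the same vectors x_{i,p} for p < k), one has ‖H_i(u) − H_i(v)‖ ≤ 3(k+2) λ_1 ‖u − v‖, where λ_1 is any upper bound on the largest eigenvalue of C_i. -/
open Matrix Finset

/-- The local Sanger direction with `k`-th argument `u` and fixed lower-order vectors
`x 1, …, x (k−1)`: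
`H(u) = C u − (uᵀ C u) u − Σ_{p=1}^{k−1} (x_pᵀ C u) x_p`. -/
noncomputable def sangerAt {d : ℕ} (C : Matrix (Fin d) (Fin d) ℝ)
    (x : ℕ → EuclideanSpace ℝ (Fin d)) (k : ℕ) (u : EuclideanSpace ℝ (Fin d)) :
    EuclideanSpace ℝ (Fin d) :=
  toE (C.mulVec u) - (u ⬝ᵥ C.mulVec u) • u
    - ∑ p ∈ Finset.Icc 1 (k - 1), ((x p) ⬝ᵥ C.mulVec u) • x p

section aux
variable {d : ℕ}

lemma inner_toE (a b : EuclideanSpace ℝ (Fin d)) :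
    (inner ℝ a b : ℝ) = (a : Fin d → ℝ) ⬝ᵥ (b : Fin d → ℝ) := by
  simp [PiLp.inner_apply, dotProduct, RCLike.inner_apply, mul_comm]

lemma tEL (C : Matrix (Fin d) (Fin d) ℝ) (w : EuclideanSpace ℝ (Fin d)) :
    Matrix.toEuclideanLin C w = toE (C.mulVec w) := rfl

end aux

section spec
variable {d : ℕ}

lemma quad_bounds (C : Matrix (Fin d) (Fin d) ℝ) (hC : C.PosSemidef)
    (lam1 : ℝ)
    (hMax : ∀ μ, Module.End.HasEigenvalue (Matrix.toEuclideanLin C) μ → μ ≤ lam1)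
    (w : EuclideanSpace ℝ (Fin d)) :
    0 ≤ w ⬝ᵥ C.mulVec w ∧ w ⬝ᵥ C.mulVec w ≤ lam1 * ‖w‖ ^ 2 ∧
      ‖toE (C.mulVec w)‖ ^ 2 ≤ lam1 * (w ⬝ᵥ C.mulVec w) := by
  have hpsd : ∀ y : EuclideanSpace ℝ (Fin d), 0 ≤ y ⬝ᵥ C.mulVec y := by
    intro y
    simpa using hC.dotProduct_mulVec_nonneg (WithLp.ofLp y)
  have hS : (Matrix.toEuclideanLin C).IsSymmetric :=
    Matrix.isHermitian_iff_isSymmetric.1 hC.1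
  set T := Matrix.toEuclideanLin C with hT
  set b := hS.eigenvectorBasis finrank_euclideanSpace_fin with hb
  set e := hS.eigenvalues finrank_euclideanSpace_fin with he
  have hTb : ∀ i, T (b i) = e i • b i := fun i => by
    exact_mod_cast hS.apply_eigenvectorBasis finrank_euclideanSpace_fin i
  have he_le : ∀ i, e i ≤ lam1 := fun i =>
    hMax _ (hS.hasEigenvalue_eigenvalues finrank_euclideanSpace_fin i)
  have he_nn : ∀ i, 0 ≤ e i := by
    intro i
    have h1 : (inner ℝ (b i) (T (b i)) : ℝ) = e i := by
      rw [hTb i, real_inner_smul_right, real_inner_self_eq_norm_sq, b.orthonormal.1 i]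
      simp
    have h2 : (inner ℝ (b i) (T (b i)) : ℝ) = (b i) ⬝ᵥ C.mulVec (b i) := by
      rw [hT, tEL, inner_toE]; rfl
    rw [← h1, h2]; exact hpsd _
  have hbTw : ∀ y : EuclideanSpace ℝ (Fin d), ∀ i,
      (inner ℝ (b i) (T y) : ℝ) = e i * inner ℝ (b i) y := by
    intro y i
    rw [← hS (b i) y, hTb i, real_inner_smul_left]
  set c : Fin d → ℝ := fun i => inner ℝ (b i) w with hc
  have s1 : ‖w‖ ^ 2 = ∑ i, c i ^ 2 := by
    rw [← real_inner_self_eq_norm_sq, ← b.sum_inner_mul_inner w w]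
    refine Finset.sum_congr rfl fun i _ => ?_
    simp only [hc, real_inner_comm w (b i)]; ring
  have s2 : w ⬝ᵥ C.mulVec w = ∑ i, e i * c i ^ 2 := by
    have : w ⬝ᵥ C.mulVec w = (inner ℝ w (T w) : ℝ) := by
      rw [hT, tEL, inner_toE]; rfl
    rw [this, ← b.sum_inner_mul_inner w (T w)]
    refine Finset.sum_congr rfl fun i _ => ?_
    rw [hbTw w i]; simp only [hc, real_inner_comm w (b i)]; ring
  have s3 : ‖toE (C.mulVec w)‖ ^ 2 = ∑ i, (e i * c i) ^ 2 := by
    have h0 : toE (C.mulVec w) = T w := (tEL C w).symm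
    rw [h0, ← real_inner_self_eq_norm_sq, ← b.sum_inner_mul_inner (T w) (T w)]
    refine Finset.sum_congr rfl fun i _ => ?_
    have h1 : (inner ℝ (T w) (b i) : ℝ) = e i * c i := by
      rw [real_inner_comm (b i) (T w), hbTw w i]
    simp only [real_inner_comm (T w) (b i)] <;> rw [h1] <;> ring
  refine ⟨hpsd w, ?_, ?_⟩
  · rw [s1, s2, Finset.mul_sum]
    refine Finset.sum_le_sum fun i _ => ?_
    exact mul_le_mul_of_nonneg_right (he_le i) (sq_nonneg _)
  · rw [s2, s3, Finset.mul_sum]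
    refine Finset.sum_le_sum fun i _ => ?_
    nlinarith [mul_le_mul_of_nonneg_right (he_le i) (mul_nonneg (he_nn i) (sq_nonneg (c i)))]

end spec

section helpers
variable {d : ℕ}

lemma abs_dot_le (a b : EuclideanSpace ℝ (Fin d)) :
    |(a : Fin d → ℝ) ⬝ᵥ (b : Fin d → ℝ)| ≤ ‖a‖ * ‖b‖ := by
  rw [← inner_toE]; exact abs_real_inner_le_norm a b

lemma le_of_sq_le' {x y : ℝ} (h : x ^ 2 ≤ y ^ 2) (hy : 0 ≤ y) : x ≤ y := by nlinarith

end helpers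


set_option maxHeartbeats 1000000 in
/-- Lemma 10, inner ℝ bound, of the paper: the local Sanger
direction is Lipschitz on the `√3`-ball:
`‖H_i(u) − H_i(v)‖ ≤ 3(k+2) λ₁ ‖u − v‖` whenever `‖u‖, ‖v‖ ≤ √3` and the
lower-order local vectors satisfy `‖x_{i,p}‖² ≤ 3`. -/
theorem sanger_direction_lipschitz
    (d K : ℕ) (hK1 : 1 ≤ K)
    (Ci : Matrix (Fin d) (Fin d) ℝ) (hCi : Ci.PosSemidef)
    -- `λ₁` : any upper bound on the largest eigenvalue of `C_i`
    (lam1 : ℝ) (hlam1 : 0 < lam1)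
    (hMax : ∀ μ, Module.End.HasEigenvalue (Matrix.toEuclideanLin Ci) μ → μ ≤ lam1)
    (k : ℕ) (hk1 : 1 ≤ k) (hkK : k ≤ K)
    (x : ℕ → EuclideanSpace ℝ (Fin d))
    (hxb : ∀ p, 1 ≤ p → p ≤ k - 1 → ‖x p‖ ^ 2 ≤ 3)
    (u v : EuclideanSpace ℝ (Fin d))
    (hu : ‖u‖ ≤ Real.sqrt 3) (hv : ‖v‖ ≤ Real.sqrt 3) :
    ‖sangerAt Ci x k u - sangerAt Ci x k v‖ ≤ 3 * ((k : ℝ) + 2) * lam1 * ‖u - v‖ := by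
  have h3 : Real.sqrt 3 * Real.sqrt 3 = 3 := Real.mul_self_sqrt (by norm_num)
  have hs3 : (0:ℝ) ≤ Real.sqrt 3 := Real.sqrt_nonneg 3
  set w : EuclideanSpace ℝ (Fin d) := u - v with hw
  have hu2 : ‖u‖ ^ 2 ≤ 3 := by nlinarith [norm_nonneg u]
  have hv2 : ‖v‖ ^ 2 ≤ 3 := by nlinarith [norm_nonneg v]
  obtain ⟨hq0u, hq1u, -⟩ := quad_bounds Ci hCi lam1 hMax u
  obtain ⟨hq0w, hq1w, hq2w⟩ := quad_bounds Ci hCi lam1 hMax w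
  obtain ⟨hq0v, hq1v, hq2v⟩ := quad_bounds Ci hCi lam1 hMax v
  set a : ℝ := u ⬝ᵥ Ci.mulVec u with hadef
  set bq : ℝ := v ⬝ᵥ Ci.mulVec v with hbdef
  have ha3 : a ≤ 3 * lam1 := by nlinarith
  have hCw : ‖toE (Ci.mulVec w)‖ ≤ lam1 * ‖w‖ := by
    refine le_of_sq_le' ?_ (by positivity)
    calc ‖toE (Ci.mulVec w)‖ ^ 2 ≤ lam1 * (w ⬝ᵥ Ci.mulVec w) := hq2w
      _ ≤ lam1 * (lam1 * ‖w‖ ^ 2) := by nlinarith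
      _ = (lam1 * ‖w‖) ^ 2 := by ring
  have hCv : ‖toE (Ci.mulVec v)‖ ≤ lam1 * ‖v‖ := by
    refine le_of_sq_le' ?_ (by positivity)
    calc ‖toE (Ci.mulVec v)‖ ^ 2 ≤ lam1 * bq := hq2v
      _ ≤ lam1 * (lam1 * ‖v‖ ^ 2) := by nlinarith
      _ = (lam1 * ‖v‖) ^ 2 := by ring
  have hmvw : ∀ y : EuclideanSpace ℝ (Fin d),
      y ⬝ᵥ Ci.mulVec w = y ⬝ᵥ Ci.mulVec u - y ⬝ᵥ Ci.mulVec v := by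
    intro y; rw [hw, WithLp.ofLp_sub, Matrix.mulVec_sub, dotProduct_sub]
  have hWsub : toE (Ci.mulVec w) = toE (Ci.mulVec u) - toE (Ci.mulVec v) := by
    rw [hw, WithLp.ofLp_sub, Matrix.mulVec_sub]; rfl
  have decomp : sangerAt Ci x k u - sangerAt Ci x k v
      = (toE (Ci.mulVec w) - a • w) - ((a - bq) • v)
        - ∑ p ∈ Finset.Icc 1 (k - 1), ((x p) ⬝ᵥ Ci.mulVec w) • x p := by
    simp only [sangerAt, hWsub]
    have hsum : ∀ p ∈ Finset.Icc 1 (k - 1), ((x p) ⬝ᵥ Ci.mulVec w) • x p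
        = ((x p) ⬝ᵥ Ci.mulVec u) • x p - ((x p) ⬝ᵥ Ci.mulVec v) • x p := by
      intro p _; rw [hmvw (x p), sub_smul]
    rw [Finset.sum_congr rfl hsum, Finset.sum_sub_distrib, hw]
    module
  -- Term 1
  have hT1 : ‖toE (Ci.mulVec w) - a • w‖ ≤ 3 * lam1 * ‖w‖ := by
    refine le_of_sq_le' ?_ (by positivity)
    have hexp : ‖toE (Ci.mulVec w) - a • w‖ ^ 2
        = ‖toE (Ci.mulVec w)‖ ^ 2 - 2 * a * (w ⬝ᵥ Ci.mulVec w) + a ^ 2 * ‖w‖ ^ 2 := by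
      rw [norm_sub_sq_real, real_inner_smul_right, inner_toE, dotProduct_comm,
        norm_smul, Real.norm_eq_abs, mul_pow, sq_abs]
      rw [show (w : Fin d → ℝ) ⬝ᵥ (toE (Ci.mulVec w) : Fin d → ℝ) = w ⬝ᵥ Ci.mulVec w from rfl]
      ring
    rw [hexp]
    rcases le_or_gt lam1 (2 * a) with hcase | hcase
    · nlinarith [hq2w, mul_nonneg (by linarith : (0:ℝ) ≤ 2 * a - lam1) hq0w,
        mul_nonneg (mul_nonneg (by linarith : (0:ℝ) ≤ 3 * lam1 - a)
          (by linarith : (0:ℝ) ≤ 3 * lam1 + a)) (sq_nonneg ‖w‖)]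
    · nlinarith [hq2w, mul_le_mul_of_nonneg_left hq1w (by linarith : (0:ℝ) ≤ lam1 - 2 * a),
        mul_nonneg (mul_nonneg (by linarith : (0:ℝ) ≤ 2 * lam1 + a)
          (by linarith : (0:ℝ) ≤ 4 * lam1 - a)) (sq_nonneg ‖w‖)]
  -- Term 2
  have hab : a - bq = (u ⬝ᵥ Ci.mulVec w) + ((w : Fin d → ℝ) ⬝ᵥ Ci.mulVec v) := by
    simp only [hadef, hbdef, hmvw u, hw]; rw [WithLp.ofLp_sub, sub_dotProduct, Matrix.mulVec_sub, dotProduct_sub]; ring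
  have habs : |a - bq| ≤ 2 * Real.sqrt 3 * lam1 * ‖w‖ := by
    rw [hab]
    calc |u ⬝ᵥ Ci.mulVec w + (w : Fin d → ℝ) ⬝ᵥ Ci.mulVec v|
        ≤ |u ⬝ᵥ Ci.mulVec w| + |(w : Fin d → ℝ) ⬝ᵥ Ci.mulVec v| := abs_add_le _ _
      _ ≤ ‖u‖ * ‖toE (Ci.mulVec w)‖ + ‖w‖ * ‖toE (Ci.mulVec v)‖ :=
          add_le_add (abs_dot_le u (toE (Ci.mulVec w))) (abs_dot_le w (toE (Ci.mulVec v)))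
      _ ≤ Real.sqrt 3 * (lam1 * ‖w‖) + ‖w‖ * (lam1 * Real.sqrt 3) := by
          refine add_le_add (mul_le_mul hu hCw (norm_nonneg _) hs3) ?_
          refine mul_le_mul_of_nonneg_left (hCv.trans ?_) (norm_nonneg w)
          exact mul_le_mul_of_nonneg_left hv hlam1.le
      _ = 2 * Real.sqrt 3 * lam1 * ‖w‖ := by ring
  have hT2 : ‖(a - bq) • v‖ ≤ 6 * lam1 * ‖w‖ := by
    rw [norm_smul, Real.norm_eq_abs]
    calc |a - bq| * ‖v‖ ≤ (2 * Real.sqrt 3 * lam1 * ‖w‖) * Real.sqrt 3 :=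
          mul_le_mul habs hv (norm_nonneg v) (by positivity)
      _ = 2 * lam1 * ‖w‖ * (Real.sqrt 3 * Real.sqrt 3) := by ring
      _ = 6 * lam1 * ‖w‖ := by rw [h3]; ring
  -- Term 3
  have hT3 : ‖∑ p ∈ Finset.Icc 1 (k - 1), ((x p) ⬝ᵥ Ci.mulVec w) • x p‖
      ≤ ((k : ℝ) - 1) * (3 * lam1 * ‖w‖) := by
    calc ‖∑ p ∈ Finset.Icc 1 (k - 1), ((x p) ⬝ᵥ Ci.mulVec w) • x p‖
        ≤ ∑ p ∈ Finset.Icc 1 (k - 1), ‖((x p) ⬝ᵥ Ci.mulVec w) • x p‖ := norm_sum_le _ _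
      _ ≤ ∑ p ∈ Finset.Icc 1 (k - 1), 3 * lam1 * ‖w‖ := by
          refine Finset.sum_le_sum fun p hp => ?_
          obtain ⟨hp1, hp2⟩ := Finset.mem_Icc.1 hp
          have hx3 := hxb p hp1 hp2
          rw [norm_smul, Real.norm_eq_abs]
          have h1 : |(x p) ⬝ᵥ Ci.mulVec w| ≤ ‖x p‖ * (lam1 * ‖w‖) :=
            (abs_dot_le (x p) (toE (Ci.mulVec w))).trans
              (mul_le_mul_of_nonneg_left hCw (norm_nonneg _))
          nlinarith [mul_le_mul_of_nonneg_right h1 (norm_nonneg (x p)),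
            mul_le_mul_of_nonneg_right hx3 (mul_nonneg hlam1.le (norm_nonneg w)),
            norm_nonneg (x p), mul_nonneg hlam1.le (norm_nonneg w)]
      _ = ((k : ℝ) - 1) * (3 * lam1 * ‖w‖) := by
          rw [Finset.sum_const, Nat.card_Icc, nsmul_eq_mul]
          have hcard : (k - 1 + 1 - 1 : ℕ) = k - 1 := by omega
          rw [hcard, Nat.cast_sub hk1]
          push_cast
          ring
  rw [decomp]
  have tri : ‖(toE (Ci.mulVec w) - a • w) - ((a - bq) • v)
      - ∑ p ∈ Finset.Icc 1 (k - 1), ((x p) ⬝ᵥ Ci.mulVec w) • x p‖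
      ≤ ‖toE (Ci.mulVec w) - a • w‖ + ‖(a - bq) • v‖
        + ‖∑ p ∈ Finset.Icc 1 (k - 1), ((x p) ⬝ᵥ Ci.mulVec w) • x p‖ := by
    refine (norm_sub_le _ _).trans ?_
    exact add_le_add_left (norm_sub_le _ _) _
  refine tri.trans ?_
  have hk' : (1 : ℝ) ≤ (k : ℝ) := by exact_mod_cast hk1
  nlinarith [hT1, hT2, hT3, norm_nonneg w, hlam1.le]
end
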